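/- arXiv:2107.06567 — 10 statements merged into one kernel-verified Lean document; each statement's English description precedes it below -/
import Mathlib

section
/- Let (Φ,X) be a flow and S ⊂ X be topologically transversal to Φ. If x ∈ S, then there exist no sequences xₙ ∈ S and tₙ > 0 with xₙ → x, tₙ → 0, and Φ(xₙ,tₙ) ∈ S for all n. -/
open Set Function Topology

structure FlowLaw {X : Type*} [TopologicalSpace X] (Φ : X → ℝ → X) : Prop where
  cont : Continuous fun p : X × ℝ => Φ p.1 p.2
  map_zero : ∀ x, Φ x 0 = x
  map_add : ∀ x t s, Φ (Φ x t) s = Φ x (t + s)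

/-- `S` is topologically transversal to the flow `Φ` on an `(n+1)`-dimensional
topological manifold: `S` is a codimension-one locally flat submanifold (via flow-box
like charts onto the unit ball sending `S` to the hyperplane slice), with locally
uniform entry/exit time bounds `δ₊ > 0 > δ₋` such that the short forward and backward
orbit segments lie in different connected components of `U \ S` and meet `S` only at the
base point; moreover `Φ(y,[a,b]) ∩ S` is compact for all `y, a, b`. -/
structure IsTransversal {X : Type*} [TopologicalSpace X] (n : ℕ)
    (Φ : X → ℝ → X) (S : Set X) : Prop where
  compact_inter : ∀ y : X, ∀ a b : ℝ, IsCompact ((fun t => Φ y t) '' Set.Icc a b ∩ S)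
  trans : ∃ δp δm : X → ℝ,
    (∀ x ∈ S, 0 < δp x ∧ δm x < 0) ∧
    ∀ x ∈ S, ∃ U : Set X, IsOpen U ∧ x ∈ U ∧
      (∃ φ : ↥U ≃ₜ ↥(Metric.ball (0 : EuclideanSpace ℝ (Fin (n+1))) 1),
        ∀ y : U, (y : X) ∈ S ↔ (φ y : EuclideanSpace ℝ (Fin (n+1))) (Fin.last n) = 0) ∧
      (∀ t ∈ Set.Icc (δm x) (δp x), t ≠ 0 → Φ x t ∈ U \ S) ∧
      connectedComponentIn (U \ S) (Φ x (δm x)) ≠ connectedComponentIn (U \ S) (Φ x (δp x)) ∧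
      (∃ V ⊆ U, IsOpen V ∧ x ∈ V ∧ ∃ δ > 0, ∀ y ∈ V ∩ S, δ < δp y ∧ δm y < -δ)

/-- if `S` is topologically transversal to the flow `Φ` and `x ∈ S`, there
are no sequences `xₙ ∈ S`, `tₙ > 0` with `xₙ → x`, `tₙ → 0` and `Φ(xₙ,tₙ) ∈ S`. -/
theorem no_frequent_returns {X : Type*} [TopologicalSpace X] [T2Space X]
    [SecondCountableTopology X] {n : ℕ} (Φ : X → ℝ → X) (S : Set X)
    (law : FlowLaw Φ) (htr : IsTransversal n Φ S) {x : X} (hx : x ∈ S) :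
    ¬ ∃ (xs : ℕ → X) (ts : ℕ → ℝ), (∀ k, xs k ∈ S) ∧ (∀ k, 0 < ts k) ∧
      Filter.Tendsto xs Filter.atTop (nhds x) ∧
      Filter.Tendsto ts Filter.atTop (nhds 0) ∧
      ∀ k, Φ (xs k) (ts k) ∈ S := by
  rintro ⟨xs, ts, hS, hpos, hxlim, htlim, hret⟩
  obtain ⟨δp, δm, hsign, h⟩ := htr.trans
  obtain ⟨U, hUo, hxU, -, -, -, V, hVU, hVo, hxV, δ, hδ, hV⟩ := h x hx
  have h1 : ∀ᶠ k in Filter.atTop, xs k ∈ V := hxlim (hVo.mem_nhds hxV)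
  have h2 : ∀ᶠ k in Filter.atTop, ts k < δ := htlim (Iio_mem_nhds hδ)
  obtain ⟨k, hkV, hkδ⟩ := (h1.and h2).exists
  have hy : xs k ∈ V ∩ S := ⟨hkV, hS k⟩
  obtain ⟨hp, hm⟩ := hV _ hy
  obtain ⟨U', -, -, -, hseg, -⟩ := h (xs k) (hS k)
  have : Φ (xs k) (ts k) ∈ U' \ S := by
    refine hseg (ts k) ⟨?_, le_of_lt (lt_trans hkδ hp)⟩ (ne_of_gt (hpos k))
    linarith [hpos k, hm, hδ]
  exact this.2 (hret k)
end

section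
/- Let (Φ,X) be a flow and S ⊂ X topologically transversal to Φ. Then for each x ∈ S and ε > 0 there exists an open neighborhood V of x in X such that Φ(y,[−ε,ε]) ∩ S ≠ ∅ for every y ∈ V. -/
open Set Function Topology

private lemma sign_lemma_aux {X : Type*} [TopologicalSpace X]
    {n : ℕ} (S : Set X) (U : Set X)
    (φ : ↥U ≃ₜ ↥(Metric.ball (0 : EuclideanSpace ℝ (Fin (n+1))) 1))
    (hφ : ∀ y : U, (y : X) ∈ S ↔ (φ y : EuclideanSpace ℝ (Fin (n+1))) (Fin.last n) = 0)
    {p q : X} (hp : p ∈ U \ S) (hq : q ∈ U \ S)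
    (hne : connectedComponentIn (U \ S) p ≠ connectedComponentIn (U \ S) q) :
    (φ ⟨p, hp.1⟩ : EuclideanSpace ℝ (Fin (n+1))) (Fin.last n) *
      (φ ⟨q, hq.1⟩ : EuclideanSpace ℝ (Fin (n+1))) (Fin.last n) < 0 := by
  set E := EuclideanSpace ℝ (Fin (n+1))
  by_contra hcon
  push_neg at hcon
  set α := (φ ⟨p, hp.1⟩ : E) (Fin.last n) with hα
  set β := (φ ⟨q, hq.1⟩ : E) (Fin.last n) with hβ
  have hα0 : α ≠ 0 := fun h => hp.2 ((hφ ⟨p, hp.1⟩).mpr h)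
  have hβ0 : β ≠ 0 := fun h => hq.2 ((hφ ⟨q, hq.1⟩).mpr h)
  have hsame : (0 < α ∧ 0 < β) ∨ (α < 0 ∧ β < 0) := by
    rcases lt_or_gt_of_ne hα0 with h1 | h1 <;> rcases lt_or_gt_of_ne hβ0 with h2 | h2
    · exact Or.inr ⟨h1, h2⟩
    · nlinarith
    · nlinarith
    · exact Or.inl ⟨h1, h2⟩
  obtain ⟨c, hc, hαc, hβc⟩ : ∃ c : ℝ, (c = 1 ∨ c = -1) ∧ 0 < c * α ∧ 0 < c * β := by
    rcases hsame with ⟨h1, h2⟩ | ⟨h1, h2⟩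
    · exact ⟨1, Or.inl rfl, by simpa, by simpa⟩
    · exact ⟨-1, Or.inr rfl, by simpa, by simpa⟩
  set H : Set E := Metric.ball (0:E) 1 ∩ {v | 0 < c * v (Fin.last n)} with hH
  have hHconv : Convex ℝ H := by
    refine (convex_ball 0 1).inter ?_
    rcases hc with rfl | rfl
    · simpa using convex_halfSpace_gt (⟨fun a b => rfl, fun c a => rfl⟩ :
        IsLinearMap ℝ fun v : E => v (Fin.last n)) 0
    · simpa using convex_halfSpace_lt (⟨fun a b => rfl, fun c a => rfl⟩ :
        IsLinearMap ℝ fun v : E => v (Fin.last n)) 0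
  have hHpre : IsPreconnected H := hHconv.isPreconnected
  set A : Set ↥(Metric.ball (0:E) 1) := {v | 0 < c * (v : E) (Fin.last n)} with hA
  have hAval : Subtype.val '' A = H := by
    ext v
    constructor
    · rintro ⟨w, hw, rfl⟩; exact ⟨w.2, hw⟩
    · rintro ⟨hv1, hv2⟩; exact ⟨⟨v, hv1⟩, hv2, rfl⟩
  have hApre : IsPreconnected A := by
    rw [← IsInducing.subtypeVal.isPreconnected_image, hAval]; exact hHpre
  set T : Set X := Subtype.val '' (φ.symm '' A) with hT
  have hTpre : IsPreconnected T :=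
    ((hApre.image _ φ.symm.continuous.continuousOn).image _ continuous_subtype_val.continuousOn)
  have hTsub : T ⊆ U \ S := by
    rintro _ ⟨u, ⟨v, hv, rfl⟩, rfl⟩
    refine ⟨(φ.symm v).2, fun hS => ?_⟩
    have := (hφ (φ.symm v)).mp hS
    rw [φ.apply_symm_apply] at this
    rw [hA] at hv
    simp only [mem_setOf_eq, this, mul_zero] at hv
    exact lt_irrefl 0 hv
  have hpT : p ∈ T :=
    ⟨⟨p, hp.1⟩, ⟨φ ⟨p, hp.1⟩, hαc, φ.symm_apply_apply _⟩, rfl⟩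
  have hqT : q ∈ T :=
    ⟨⟨q, hq.1⟩, ⟨φ ⟨q, hq.1⟩, hβc, φ.symm_apply_apply _⟩, rfl⟩
  exact hne (connectedComponentIn_eq (hTpre.subset_connectedComponentIn hpT hTsub hqT))

/-- if `S` is topologically transversal to `Φ`, then for every `x ∈ S` and
`ε > 0` there is an open neighborhood `V` of `x` such that `Φ(y,[−ε,ε]) ∩ S ≠ ∅` for all
`y ∈ V`. -/
theorem exists_nhd_hitting_section {X : Type*} [TopologicalSpace X] [T2Space X]
    [SecondCountableTopology X] {n : ℕ} (Φ : X → ℝ → X) (S : Set X)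
    (law : FlowLaw Φ) (htr : IsTransversal n Φ S) {x : X} (hx : x ∈ S)
    {ε : ℝ} (hε : 0 < ε) :
    ∃ V : Set X, IsOpen V ∧ x ∈ V ∧ ∀ y ∈ V, ∃ t ∈ Set.Icc (-ε) ε, Φ y t ∈ S := by
  classical
  obtain ⟨δp, δm, hδ, htrans⟩ := htr.trans
  obtain ⟨hδp, hδm⟩ := hδ x hx
  obtain ⟨U, hUo, hxU, ⟨φ, hφ⟩, horb, hcc, -⟩ := htrans x hx
  set E := EuclideanSpace ℝ (Fin (n+1))
  set a := max (δm x) (-ε) with ha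
  set b := min (δp x) ε with hb
  have ha0 : a < 0 := max_lt hδm (by linarith)
  have hb0 : 0 < b := lt_min hδp hε
  have hab : a ≤ b := le_of_lt (ha0.trans hb0)
  have haI : ∀ t ∈ Icc a b, t ∈ Icc (δm x) (δp x) := fun t ht =>
    ⟨(le_max_left _ _).trans ht.1, ht.2.trans (min_le_left _ _)⟩
  -- Φ x maps [a,b] into U
  have hmemU : ∀ t ∈ Icc a b, Φ x t ∈ U := by
    intro t ht
    by_cases h0 : t = 0
    · rw [h0, law.map_zero]; exact hxU
    · exact (horb t (haI t ht) h0).1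
  -- continuity of the flow slices
  have hΦcont : ∀ y : X, Continuous fun t => Φ y t := fun y =>
    law.cont.comp (Continuous.prodMk_right y)
  have hΦcont' : ∀ t : ℝ, Continuous fun y => Φ y t := fun t =>
    law.cont.comp (continuous_id.prodMk continuous_const)
  -- endpoints lie in different components
  have hcomp : ∀ s t : ℝ, s ∈ Icc (δm x) (δp x) → t ∈ Icc (δm x) (δp x) → s ≤ t →
      (∀ r ∈ Icc s t, r ≠ 0) →
      connectedComponentIn (U \ S) (Φ x s) = connectedComponentIn (U \ S) (Φ x t) := by
    intro s t hs ht hst hne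
    have hK : IsPreconnected ((fun r => Φ x r) '' Icc s t) :=
      isPreconnected_Icc.image _ (hΦcont x).continuousOn
    have hKsub : (fun r => Φ x r) '' Icc s t ⊆ U \ S := by
      rintro _ ⟨r, hr, rfl⟩
      exact horb r ⟨hs.1.trans hr.1, hr.2.trans ht.2⟩ (hne r hr)
    have hsK : Φ x s ∈ (fun r => Φ x r) '' Icc s t := ⟨s, ⟨le_refl _, hst⟩, rfl⟩
    have htK : Φ x t ∈ (fun r => Φ x r) '' Icc s t := ⟨t, ⟨hst, le_refl _⟩, rfl⟩
    exact connectedComponentIn_eq (hK.subset_connectedComponentIn hsK hKsub htK)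
  have hccab : connectedComponentIn (U \ S) (Φ x a) ≠ connectedComponentIn (U \ S) (Φ x b) := by
    have h1 : connectedComponentIn (U \ S) (Φ x (δm x)) = connectedComponentIn (U \ S) (Φ x a) :=
      hcomp (δm x) a ⟨le_refl _, le_of_lt (hδm.trans hδp)⟩ (haI a ⟨le_refl _, hab⟩)
        (le_max_left _ _) (fun r hr => ne_of_lt (lt_of_le_of_lt hr.2 ha0))
    have h2 : connectedComponentIn (U \ S) (Φ x b) = connectedComponentIn (U \ S) (Φ x (δp x)) :=
      hcomp b (δp x) (haI b ⟨hab, le_refl _⟩) ⟨le_of_lt (hδm.trans hδp), le_refl _⟩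
        (min_le_left _ _) (fun r hr => (ne_of_gt (lt_of_lt_of_le hb0 hr.1)))
    intro h; exact hcc (h1.trans (h.trans h2))
  have hpa : Φ x a ∈ U \ S := horb a (haI a ⟨le_refl _, hab⟩) (ne_of_lt ha0)
  have hpb : Φ x b ∈ U \ S := horb b (haI b ⟨hab, le_refl _⟩) (ne_of_gt hb0)
  -- the coordinate function
  set F : X → ℝ := fun u => if h : u ∈ U then (φ ⟨u, h⟩ : E) (Fin.last n) else 0 with hF
  have hFrestrict : ∀ (u : X) (h : u ∈ U), F u = (φ ⟨u, h⟩ : E) (Fin.last n) := by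
    intro u h; simp [hF, dif_pos h]
  have hFcont : ContinuousOn F U := by
    rw [continuousOn_iff_continuous_restrict]
    have : domRestrict U F = fun u : ↥U => (φ u : E) (Fin.last n) := by
      funext u
      simp only [domRestrict_apply, hFrestrict u.1 u.2]
    rw [this]
    exact (continuous_apply (Fin.last n)).comp ((PiLp.continuous_ofLp ..).comp (continuous_subtype_val.comp φ.continuous))
  have hFzero : ∀ (u : X) (h : u ∈ U), (F u = 0 ↔ u ∈ S) := by
    intro u h
    rw [hFrestrict u h]
    exact ((hφ ⟨u, h⟩)).symm
  set α := F (Φ x a) with hαdef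
  set β := F (Φ x b) with hβdef
  have hαβ : α * β < 0 := by
    have := sign_lemma_aux S U φ hφ hpa hpb hccab
    rwa [hαdef, hβdef, hFrestrict _ hpa.1, hFrestrict _ hpb.1]
  have hα0 : α ≠ 0 := fun h => hpa.2 ((hFzero _ hpa.1).mp h)
  have hβ0 : β ≠ 0 := fun h => hpb.2 ((hFzero _ hpb.1).mp h)
  -- tube lemma
  obtain ⟨u, v, huo, hvo, hxu, hIv, huv⟩ :=
    generalized_tube_lemma isCompact_singleton isCompact_Icc
      (hUo.preimage law.cont) (by
        rintro ⟨y, t⟩ ⟨hy, ht⟩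
        rcases hy with rfl
        exact hmemU t ht : {x} ×ˢ Icc a b ⊆ (fun p : X × ℝ => Φ p.1 p.2) ⁻¹' U)
  -- sign neighborhoods
  have hO : ∀ γ : ℝ, IsOpen (U ∩ (fun w => F w * γ) ⁻¹' Ioi 0) := fun γ =>
    (hFcont.mul continuousOn_const).isOpen_inter_preimage hUo isOpen_Ioi
  set W1 : Set X := (fun y => Φ y a) ⁻¹' (U ∩ (fun w => F w * α) ⁻¹' Ioi 0) with hW1
  set W2 : Set X := (fun y => Φ y b) ⁻¹' (U ∩ (fun w => F w * β) ⁻¹' Ioi 0) with hW2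
  have hW1o : IsOpen W1 := (hO α).preimage (hΦcont' a)
  have hW2o : IsOpen W2 := (hO β).preimage (hΦcont' b)
  have hxW1 : x ∈ W1 := ⟨hpa.1, by simpa [← hαdef] using mul_self_pos.mpr hα0⟩
  have hxW2 : x ∈ W2 := ⟨hpb.1, by simpa [← hβdef] using mul_self_pos.mpr hβ0⟩
  refine ⟨u ∩ W1 ∩ W2, (huo.inter hW1o).inter hW2o, ⟨⟨hxu rfl, hxW1⟩, hxW2⟩, ?_⟩
  rintro y ⟨⟨hyu, hy1⟩, hy2⟩
  have hyU : ∀ t ∈ Icc a b, Φ y t ∈ U := fun t ht => huv (Set.mk_mem_prod hyu (hIv ht))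
  set g : ℝ → ℝ := fun t => F (Φ y t) with hg
  have hgcont : ContinuousOn g (Icc a b) :=
    hFcont.comp (hΦcont y).continuousOn hyU
  have hga : 0 < g a * α := hy1.2
  have hgb : 0 < g b * β := hy2.2
  have hgab : g a * g b < 0 := by nlinarith
  have h0mem : (0:ℝ) ∈ uIcc (g a) (g b) := by
    rcases mul_neg_iff.mp hgab with ⟨h1, h2⟩ | ⟨h1, h2⟩
    · exact mem_uIcc.mpr (Or.inr ⟨le_of_lt h2, le_of_lt h1⟩)
    · exact mem_uIcc.mpr (Or.inl ⟨le_of_lt h1, le_of_lt h2⟩)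
  have := intermediate_value_uIcc (by rwa [uIcc_of_le hab] : ContinuousOn g (uIcc a b)) h0mem
  obtain ⟨t, htI, htg⟩ := this
  rw [uIcc_of_le hab] at htI
  exact ⟨t, ⟨(le_max_right (δm x) (-ε)).trans htI.1, htI.2.trans (min_le_right _ _)⟩,
    (hFzero _ (hyU t htI)).mp htg⟩
end

section
/- Let (Φ,X) be a flow with global Poincaré section S. Then for every x ∈ S, the series ∑_{n=0}^∞ T_Φ((PΦ)ⁿ(x)) and ∑_{n=1}^∞ T_Φ((PΦ)^{−n}(x)) both diverge to infinity, where PΦ is the first return map and T_Φ the first return time. -/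
open Set Function Topology

/-- A global Poincaré section: a topologically transversal submanifold met by every
orbit in forward and in backward time. -/
structure IsGlobalSection {X : Type*} [TopologicalSpace X] (n : ℕ)
    (Φ : X → ℝ → X) (S : Set X) : Prop where
  transversal : IsTransversal n Φ S
  forward : ∀ x : X, ∃ t > 0, Φ x t ∈ S
  backward : ∀ x : X, ∃ t < 0, Φ x t ∈ S

/-- `T` is the first return time of the flow `Φ` to the section `S`: it is positive,
attained, and no earlier positive time returns to `S`. -/
def IsFirstReturn {X : Type*} (Φ : X → ℝ → X) (S : Set X) (T : X → ℝ) : Prop :=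
  ∀ x ∈ S, 0 < T x ∧ Φ x (T x) ∈ S ∧ ∀ t ∈ Set.Ioo 0 (T x), Φ x t ∉ S

/-- Locally uniform positive lower bound for the first return time. -/
lemma exists_return_time_lower_bound {X : Type*} [TopologicalSpace X] {n : ℕ}
    {Φ : X → ℝ → X} {S : Set X} (hgs : IsGlobalSection n Φ S)
    {T : X → ℝ} (hT : IsFirstReturn Φ S T) {y₀ : X} (hy₀ : y₀ ∈ S) :
    ∃ V : Set X, IsOpen V ∧ y₀ ∈ V ∧ ∃ δ > 0, ∀ y ∈ V ∩ S, δ < T y := by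
  obtain ⟨δp, δm, hsign, hchart⟩ := hgs.transversal.trans
  have hTδ : ∀ y ∈ S, δp y < T y := by
    intro y hy
    by_contra h
    push_neg at h
    obtain ⟨U, _, _, _, havoid, _, _⟩ := hchart y hy
    have hmem : T y ∈ Set.Icc (δm y) (δp y) :=
      ⟨le_of_lt (lt_trans (hsign y hy).2 (hT y hy).1), h⟩
    exact (havoid (T y) hmem (ne_of_gt (hT y hy).1)).2 (hT y hy).2.1
  obtain ⟨U, _, _, _, _, _, V, hVU, hVopen, hy₀V, δ, hδ, hVδ⟩ := hchart y₀ hy₀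
  exact ⟨V, hVopen, hy₀V, δ, hδ, fun y hy => lt_trans (hVδ y hy).1 (hTδ y hy.2)⟩

/-- No sequence in a compact subset of `S` can have return times tending to `0`. -/
lemma no_vanishing_return_times {X : Type*} [TopologicalSpace X] [T2Space X]
    [SecondCountableTopology X] {n : ℕ}
    {Φ : X → ℝ → X} {S : Set X} (hgs : IsGlobalSection n Φ S)
    {T : X → ℝ} (hT : IsFirstReturn Φ S T) {K : Set X} (hK : IsCompact K)
    (hKS : K ⊆ S) (f : ℕ → X) (hf : ∀ N, f N ∈ K)
    (h0 : Filter.Tendsto (fun N => T (f N)) Filter.atTop (𝓝 0)) : False := by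
  obtain ⟨y₀, hy₀K, φ, hφ, hconv⟩ := hK.tendsto_subseq hf
  obtain ⟨V, hVopen, hy₀V, δ, hδ, hVδ⟩ :=
    exists_return_time_lower_bound hgs hT (hKS hy₀K)
  have h1 : ∀ᶠ j in Filter.atTop, f (φ j) ∈ V :=
    hconv (hVopen.mem_nhds hy₀V)
  have h2 : ∀ᶠ j in Filter.atTop, T (f (φ j)) < δ := by
    have := (h0.comp hφ.tendsto_atTop) (Iio_mem_nhds hδ)
    simpa using this
  obtain ⟨j, hjV, hjδ⟩ := (h1.and h2).exists
  exact absurd (hVδ _ ⟨hjV, hKS (hf (φ j))⟩) (not_lt.2 hjδ.le)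

/-- for a flow with global Poincaré section, the series
`∑_{n≥0} T_Φ((PΦ)ⁿ x)` and `∑_{n≥1} T_Φ((PΦ)^{−n} x)` diverge to infinity for every
`x ∈ S`.  Here `P = PΦ` is the first return map and `Q` its inverse on `S`. -/
theorem return_time_series_diverges {X : Type*} [TopologicalSpace X] [T2Space X]
    [SecondCountableTopology X] {n : ℕ} (Φ : X → ℝ → X) (S : Set X)
    (law : FlowLaw Φ) (hgs : IsGlobalSection n Φ S)
    (T : X → ℝ) (hT : IsFirstReturn Φ S T)
    (P Q : X → X) (hP : ∀ x, P x = Φ x (T x))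
    (hQS : Set.MapsTo Q S S)
    (hQP : ∀ x ∈ S, Q (P x) = x) (hPQ : ∀ x ∈ S, P (Q x) = x)
    {x : X} (hx : x ∈ S) :
    Filter.Tendsto (fun N => ∑ k ∈ Finset.range N, T (P^[k] x)) Filter.atTop Filter.atTop ∧
    Filter.Tendsto (fun N => ∑ k ∈ Finset.range N, T (Q^[k+1] x)) Filter.atTop Filter.atTop := by
  constructor
  · -- forward series
    set s : ℕ → ℝ := fun N => ∑ k ∈ Finset.range N, T (P^[k] x) with hs
    have hPS : ∀ y ∈ S, P y ∈ S := fun y hy => by rw [hP]; exact (hT y hy).2.1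
    have hiter : ∀ k, P^[k] x ∈ S := by
      intro k
      induction k with
      | zero => simpa using hx
      | succ k ih => rw [Function.iterate_succ_apply']; exact hPS _ ih
    have hterm : ∀ k, 0 < T (P^[k] x) := fun k => (hT _ (hiter k)).1
    have hmono : Monotone s := monotone_nat_of_le_succ fun N => by
      simp only [hs, Finset.sum_range_succ]; linarith [hterm N]
    have hid : ∀ N, P^[N] x = Φ x (s N) := by
      intro N
      induction N with
      | zero => simp [hs, law.map_zero]
      | succ N ih =>
          rw [Function.iterate_succ_apply', hP, ih]
        
          simp only [hs, Finset.sum_range_succ, ← law.map_add, ← ih]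
          rw [ih]
    rcases tendsto_of_monotone hmono with h | ⟨l, hl⟩
    · exact h
    · exfalso
      have hdiff : Filter.Tendsto (fun N => T (P^[N] x)) Filter.atTop (𝓝 0) := by
        have h1 : Filter.Tendsto (fun N => s (N + 1) - s N) Filter.atTop (𝓝 (l - l)) :=
          (hl.comp (Filter.tendsto_add_atTop_nat 1)).sub hl
        have h2 : (fun N => s (N + 1) - s N) = fun N => T (P^[N] x) := by
          funext N; simp [hs, Finset.sum_range_succ]
        rw [h2, sub_self] at h1
        exact h1
      exact no_vanishing_return_times hgs hT
        (hgs.transversal.compact_inter x 0 l) Set.inter_subset_right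
        (fun N => P^[N] x)
        (fun N => ⟨⟨s N, ⟨Finset.sum_nonneg fun k _ => (hterm k).le,
          hmono.ge_of_tendsto hl N⟩, (hid N).symm⟩, hiter N⟩) hdiff
  · -- backward series
    set s : ℕ → ℝ := fun N => ∑ k ∈ Finset.range N, T (Q^[k+1] x) with hs
    have hiter : ∀ k, Q^[k] x ∈ S := by
      intro k
      induction k with
      | zero => simpa using hx
      | succ k ih => rw [Function.iterate_succ_apply']; exact hQS ih
    have hterm : ∀ k, 0 < T (Q^[k+1] x) := fun k => (hT _ (hiter (k+1))).1
    have hmono : Monotone s := monotone_nat_of_le_succ fun N => by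
      simp only [hs, Finset.sum_range_succ]; linarith [hterm N]
    have hQeq : ∀ y ∈ S, Q y = Φ y (-(T (Q y))) := by
      intro y hy
      have h : Φ (Q y) (T (Q y)) = y := by rw [← hP]; exact hPQ y hy
      calc Q y = Φ (Q y) 0 := (law.map_zero _).symm
        _ = Φ (Φ (Q y) (T (Q y))) (-(T (Q y))) := by
              rw [law.map_add, add_neg_cancel]
        _ = Φ y (-(T (Q y))) := by rw [h]
    have hid : ∀ N, Q^[N] x = Φ x (-(s N)) := by
      intro N
      induction N with
      | zero => simp [hs, law.map_zero]
      | succ N ih =>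
          have h1 : Q^[N+1] x = Q (Q^[N] x) := Function.iterate_succ_apply' Q N x
          have h2 : Q (Q^[N] x) = Φ (Q^[N] x) (-(T (Q^[N+1] x))) := by
            rw [hQeq _ (hiter N), ← h1]
          rw [h1, h2, ih, law.map_add]
          congr 1
          simp [hs, Finset.sum_range_succ]
          ring
    rcases tendsto_of_monotone hmono with h | ⟨l, hl⟩
    · exact h
    · exfalso
      have hdiff : Filter.Tendsto (fun N => T (Q^[N+1] x)) Filter.atTop (𝓝 0) := by
        have h1 : Filter.Tendsto (fun N => s (N + 1) - s N) Filter.atTop (𝓝 (l - l)) :=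
          (hl.comp (Filter.tendsto_add_atTop_nat 1)).sub hl
        have h2 : (fun N => s (N + 1) - s N) = fun N => T (Q^[N+1] x) := by
          funext N; simp [hs, Finset.sum_range_succ]
        rw [h2, sub_self] at h1
        exact h1
      refine no_vanishing_return_times hgs hT
        (hgs.transversal.compact_inter x (-l) 0) Set.inter_subset_right
        (fun N => Q^[N+1] x) (fun N => ⟨⟨-(s (N+1)), ⟨?_, ?_⟩, (hid (N+1)).symm⟩,
          hiter (N+1)⟩) hdiff
      · exact neg_le_neg (hmono.ge_of_tendsto hl (N+1))
      · simpa [hs] using Finset.sum_nonneg fun k _ => (hterm k).le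
end

section
/- Let (Φ,X) and (Ψ,Y) be flows with global Poincaré sections S and S′ respectively, and (h,τ) : (Φ,X) → (Ψ,Y) a weak morphism. (1) If h(S) ⊆ S′, then T_Ψ(h(x)) ≤ τ(x, T_Φ(x)) for all x ∈ S. (2) If h⁻¹(S′) ⊆ S, then τ(x, T_Φ(x)) ≤ T_Ψ(h(x)) for all x ∈ h⁻¹(S′). In particular, if S = h⁻¹(S′), then T_Ψ(h(x)) = τ(x, T_Φ(x)) for all x ∈ S. -/
open Set Function Topology

/-- A weak morphism of flows: a continuous map `h` together with time
reparametrizations `τ x : ℝ → ℝ`, each an increasing homeomorphism fixing `0`. -/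
structure IsWeakMorphism {X Y : Type*} [TopologicalSpace X] [TopologicalSpace Y]
    (Φ : X → ℝ → X) (Ψ : Y → ℝ → Y) (h : X → Y) (τ : X → ℝ → ℝ) : Prop where
  cont : Continuous h
  equivariant : ∀ x t, h (Φ x t) = Ψ (h x) (τ x t)
  time_cont : ∀ x, Continuous (τ x)
  mono : ∀ x, StrictMono (τ x)
  surj : ∀ x, Function.Surjective (τ x)
  time_zero : ∀ x, τ x 0 = 0

/-- comparison of first return times under a weak morphism `(h,τ)`.
(1) If `h(S) ⊆ S′` then `T_Ψ(h x) ≤ τ(x, T_Φ x)` on `S`.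
(2) If `h⁻¹(S′) ⊆ S` then `τ(x, T_Φ x) ≤ T_Ψ(h x)` on `h⁻¹(S′)`.
In particular if `S = h⁻¹(S′)` then `T_Ψ(h x) = τ(x, T_Φ x)` on `S`. -/
theorem return_time_weak_morphism {X Y : Type*} [TopologicalSpace X] [T2Space X]
    [SecondCountableTopology X] [TopologicalSpace Y] [T2Space Y]
    [SecondCountableTopology Y] {n m : ℕ}
    (Φ : X → ℝ → X) (S : Set X) (Ψ : Y → ℝ → Y) (S' : Set Y)
    (lawΦ : FlowLaw Φ) (lawΨ : FlowLaw Ψ)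
    (hgs : IsGlobalSection n Φ S) (hgs' : IsGlobalSection m Ψ S')
    (TΦ : X → ℝ) (TΨ : Y → ℝ) (hTΦ : IsFirstReturn Φ S TΦ) (hTΨ : IsFirstReturn Ψ S' TΨ)
    (h : X → Y) (τ : X → ℝ → ℝ) (hw : IsWeakMorphism Φ Ψ h τ) :
    ((Set.MapsTo h S S') → ∀ x ∈ S, TΨ (h x) ≤ τ x (TΦ x)) ∧
    ((h ⁻¹' S' ⊆ S) → ∀ x ∈ h ⁻¹' S', τ x (TΦ x) ≤ TΨ (h x)) ∧
    ((S = h ⁻¹' S') → ∀ x ∈ S, TΨ (h x) = τ x (TΦ x)) := by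
  have part1 : (Set.MapsTo h S S') → ∀ x ∈ S, TΨ (h x) ≤ τ x (TΦ x) := by
    intro hm x hx
    have hx' : h x ∈ S' := hm hx
    obtain ⟨hTpos, hTmem, hTmin⟩ := hTΦ x hx
    obtain ⟨hTpos', _, hTmin'⟩ := hTΨ (h x) hx'
    have hτpos : 0 < τ x (TΦ x) := by
      have := (hw.mono x) hTpos
      rwa [hw.time_zero x] at this
    by_contra hlt
    push_neg at hlt
    have : Ψ (h x) (τ x (TΦ x)) ∈ S' := by
      rw [← hw.equivariant x (TΦ x)]
      exact hm hTmem
    exact hTmin' _ ⟨hτpos, hlt⟩ this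
  have part2 : (h ⁻¹' S' ⊆ S) → ∀ x ∈ h ⁻¹' S', τ x (TΦ x) ≤ TΨ (h x) := by
    intro hsub x hx
    have hxS : x ∈ S := hsub hx
    obtain ⟨hTpos, hTmem, hTmin⟩ := hTΦ x hxS
    obtain ⟨hTpos', hTmem', _⟩ := hTΨ (h x) hx
    by_contra hlt
    push_neg at hlt
    obtain ⟨t, ht⟩ := hw.surj x (TΨ (h x))
    have ht0 : 0 < t := by
      have := (hw.mono x).lt_iff_lt (a := 0) (b := t)
      rw [hw.time_zero x, ht] at this
      exact this.mp hTpos'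
    have htT : t < TΦ x := by
      have := (hw.mono x).lt_iff_lt (a := t) (b := TΦ x)
      rw [ht] at this
      exact this.mp hlt
    have : Φ x t ∈ S := by
      apply hsub
      show h (Φ x t) ∈ S'
      rw [hw.equivariant x t, ht]
      exact hTmem'
    exact hTmin t ⟨ht0, htT⟩ this
  refine ⟨part1, part2, fun hEq x hx => ?_⟩
  have hm : Set.MapsTo h S S' := fun y hy => by rw [hEq] at hy; exact hy
  exact le_antisymm (part1 hm x hx) (part2 hEq.ge x (hEq ▸ hx))
end

section
/- Let (Φ,X) and (Ψ,Y) be flows with global Poincaré sections S and S′, and (h,τ) a weak morphism with h⁻¹(S′) = S. Then the restriction h|_S : S → S′ satisfies h|_S ∘ PΦ = PΨ ∘ h|_S, i.e., it is a morphism of map dynamical systems from (PΦ,S) to (PΨ,S′). -/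
open Set Function Topology

/-- if `(h,τ)` is a weak morphism with `h⁻¹(S′) = S`, then the restriction
of `h` to the sections intertwines the Poincaré maps: `h ∘ PΦ = PΨ ∘ h` on `S`; i.e. it
is a morphism of map dynamical systems `(PΦ, S) → (PΨ, S′)`. -/
theorem poincare_map_functorial {X Y : Type*} [TopologicalSpace X] [T2Space X]
    [SecondCountableTopology X] [TopologicalSpace Y] [T2Space Y]
    [SecondCountableTopology Y] {n m : ℕ}
    (Φ : X → ℝ → X) (S : Set X) (Ψ : Y → ℝ → Y) (S' : Set Y)
    (lawΦ : FlowLaw Φ) (lawΨ : FlowLaw Ψ)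
    (hgs : IsGlobalSection n Φ S) (hgs' : IsGlobalSection m Ψ S')
    (TΦ : X → ℝ) (TΨ : Y → ℝ) (hTΦ : IsFirstReturn Φ S TΦ) (hTΨ : IsFirstReturn Ψ S' TΨ)
    (h : X → Y) (τ : X → ℝ → ℝ) (hw : IsWeakMorphism Φ Ψ h τ)
    (hpre : h ⁻¹' S' = S) :
    (Set.MapsTo h S S') ∧
    ∀ x ∈ S, h (Φ x (TΦ x)) = Ψ (h x) (TΨ (h x)) := by
  have hmaps : Set.MapsTo h S S' := fun x hx => by
    rw [← hpre] at hx; exact hx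
  refine ⟨hmaps, fun x hx => ?_⟩
  have hx' : h x ∈ S' := hmaps hx
  obtain ⟨hT1, hT2, hT3⟩ := hTΦ x hx
  obtain ⟨hT1', hT2', hT3'⟩ := hTΨ (h x) hx'
  have heq : h (Φ x (TΦ x)) = Ψ (h x) (τ x (TΦ x)) := hw.equivariant x (TΦ x)
  suffices hkey : τ x (TΦ x) = TΨ (h x) by rw [heq, hkey]
  have hpos : 0 < τ x (TΦ x) := by
    have := hw.mono x hT1
    rwa [hw.time_zero x] at this
  have hmem : Ψ (h x) (τ x (TΦ x)) ∈ S' := by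
    rw [← heq]
    have : Φ x (TΦ x) ∈ S := hT2
    rw [← hpre] at this; exact this
  rcases lt_trichotomy (τ x (TΦ x)) (TΨ (h x)) with hlt | heq' | hgt
  · exact absurd hmem (hT3' _ ⟨hpos, hlt⟩)
  · exact heq'
  · obtain ⟨t, ht⟩ := hw.surj x (TΨ (h x))
    have ht0 : 0 < t := by
      by_contra hc
      push_neg at hc
      have := (hw.mono x).monotone hc
      rw [ht, hw.time_zero x] at this
      exact absurd this (not_le.mpr hT1')
    have htT : t < TΦ x := by
      by_contra hc
      push_neg at hc
      have := (hw.mono x).monotone hc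
      rw [ht] at this
      exact absurd this (not_le.mpr hgt)
    have : Φ x t ∈ S := by
      rw [← hpre]
      show h (Φ x t) ∈ S'
      rw [hw.equivariant x t, ht]
      exact hT2'
    exact absurd this (hT3 t ⟨ht0, htT⟩)
end

section
/- Let (Φ,X) be a flow with global Poincaré section S, with return time T_Φ and return map PΦ. The map k : S_{PΦ} → X defined on the mapping torus of PΦ by k([x,t]) := Φ(x, t·T_Φ(x)) (for x ∈ S, 0 ≤ t < 1) is well-defined and bijective. -/
open Set Function Topology

/-- The relation generating the mapping torus identification `(x, t) ∼ (f x, t − 1)`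
(so in particular `(x,1) ∼ (f x, 0)`). -/
def MTRel {X : Type*} [TopologicalSpace X] (f : X ≃ₜ X) : X × ℝ → X × ℝ → Prop :=
  fun p q => q.1 = f p.1 ∧ q.2 = p.2 - 1

/-- The mapping torus `X_f` of a homeomorphism `f : X → X`, with the quotient
topology.  Every point has a unique representative `[x,t]` with `0 ≤ t < 1`. -/
abbrev MappingTorus {X : Type*} [TopologicalSpace X] (f : X ≃ₜ X) : Type _ :=
  Quot (MTRel f)

/-- The class `[x,t]` of `(x,t)` in the mapping torus. -/
def mtk {X : Type*} [TopologicalSpace X] (f : X ≃ₜ X) (x : X) (t : ℝ) :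
    MappingTorus f := Quot.mk _ (x, t)

/-- The suspension flow `Σf` on the mapping torus; on classes it satisfies
`Σf([x,t],s) = [fⁿ x, s+t−n]` for the unique integer `n` with `s+t−1 < n ≤ s+t`. -/
def susp {X : Type*} [TopologicalSpace X] (f : X ≃ₜ X) (p : MappingTorus f) (s : ℝ) :
    MappingTorus f :=
  Quot.lift (fun q : X × ℝ => Quot.mk (MTRel f) (q.1, q.2 + s))
    (fun a b hab => Quot.sound ⟨hab.1, by rw [hab.2]; ring⟩) p

/-- The zero section `(X_f)₀ = {[x,0] : x ∈ X}` of the mapping torus. -/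
def zeroSection {X : Type*} [TopologicalSpace X] (f : X ≃ₜ X) : Set (MappingTorus f) :=
  {p | ∃ x : X, p = mtk f x 0}


/-- The piecewise constant function `R_Φ(x)(u) = T_Φ((PΦ)^i x)` for `u ∈ [i, i+1)`,
where the return map (a homeomorphism of the section) is given as `Pr`. -/
noncomputable def Rfun {X : Type*} [TopologicalSpace X] (T : X → ℝ) {S : Set X}
    (Pr : ↥S ≃ₜ ↥S) (x : ↥S) (u : ℝ) : ℝ :=
  T ((Pr.toEquiv ^ ⌊u⌋) x : ↥S)

/-- The time part `τ([x,t],s) = ∫₀^{s+t} R_Φ(x)(u) du − t·T_Φ(x)` of the natural weak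
morphism from the suspension of the Poincaré map to the original flow. -/
noncomputable def tauTime {X : Type*} [TopologicalSpace X] (T : X → ℝ) {S : Set X}
    (Pr : ↥S ≃ₜ ↥S) (x : ↥S) (t s : ℝ) : ℝ :=
  (∫ u in (0:ℝ)..(s + t), Rfun T Pr x u) - t * T (x : X)

noncomputable def hitTimes {X : Type*} [TopologicalSpace X] (T : X → ℝ) {S : Set X}
    (Pr : ↥S ≃ₜ ↥S) (x : ↥S) : ℕ → ℝ
  | 0 => 0
  | n+1 => hitTimes T Pr x n + T ((((Pr.toEquiv : Equiv.Perm ↥S) ^ n) x : ↥S) : X)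

/-- for a flow `Φ` with global Poincaré section `S`, return time `T` and
return map `Pr` (a homeomorphism of `S`), the map `k([x,t]) = Φ(x, t·T(x))` (for
`0 ≤ t < 1`) from the mapping torus of the return map to `X` is well defined and
bijective. -/
theorem torus_to_flow_bijective {X : Type*} [TopologicalSpace X] [T2Space X]
    [SecondCountableTopology X] {n : ℕ} (Φ : X → ℝ → X) (S : Set X)
    (law : FlowLaw Φ) (hgs : IsGlobalSection n Φ S)
    (T : X → ℝ) (hT : IsFirstReturn Φ S T)
    (Pr : ↥S ≃ₜ ↥S) (hPr : ∀ x : ↥S, (Pr x : X) = Φ x (T x)) :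
    ∃ k : MappingTorus Pr → X,
      (∀ (x : ↥S) (t : ℝ), 0 ≤ t → t < 1 → k (mtk Pr x t) = Φ x (t * T x)) ∧
      Function.Bijective k := by
  classical
  have hcontx : ∀ x : X, Continuous fun t : ℝ => Φ x t := fun x =>
    law.cont.comp (continuous_const.prodMk continuous_id)
  -- flow along iterates of the return map
  have hflow_hit : ∀ (x : ↥S) (m : ℕ),
      Φ (x : X) (hitTimes T Pr x m) = ((Pr.toEquiv ^ m) x : X) := by
    intro x m
    induction m with
    | zero => simp [hitTimes, law.map_zero]
    | succ m ih =>
      have hdef : hitTimes T Pr x (m+1)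
          = hitTimes T Pr x m + T (((Pr.toEquiv ^ m) x : ↥S) : X) := rfl
      rw [hdef, ← law.map_add, ih, ← hPr, pow_succ', Equiv.Perm.mul_apply]
      rfl
  have hσmono : ∀ (x : ↥S), StrictMono (hitTimes T Pr x) := by
    intro x
    apply strictMono_nat_of_lt_succ
    intro m
    have := (hT _ ((Pr.toEquiv ^ m) x).2).1
    simp only [hitTimes]
    linarith
  have hσ0 : ∀ (x : ↥S) (m : ℕ), 0 ≤ hitTimes T Pr x m := by
    intro x m
    have : hitTimes T Pr x 0 = 0 := rfl
    cases m with
    | zero => simp [this]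
    | succ m => exact le_of_lt (this ▸ hσmono x (Nat.succ_pos m))
  -- divergence of hit times
  have hdiv : ∀ (x : ↥S) (s : ℝ), ∃ m : ℕ, s < hitTimes T Pr x m := by
    intro x s
    by_contra hcon
    push_neg at hcon
    set σ := hitTimes T Pr x with hσdef
    have hbdd : BddAbove (Set.range σ) := ⟨s, by rintro _ ⟨m, rfl⟩; exact hcon m⟩
    set L := ⨆ m, σ m with hL
    have htend : Filter.Tendsto σ Filter.atTop (nhds L) :=
      tendsto_atTop_ciSup (hσmono x).monotone hbdd
    have hσle : ∀ m, σ m ≤ L := fun m => le_ciSup hbdd m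
    set p := Φ (x : X) L with hp
    have hptend : Filter.Tendsto (fun m => Φ (x : X) (σ m)) Filter.atTop (nhds p) :=
      ((hcontx (x : X)).tendsto L).comp htend
    have hK : IsCompact ((fun t => Φ (x : X) t) '' Set.Icc 0 L ∩ S) :=
      hgs.transversal.compact_inter (x : X) 0 L
    have hmemK : ∀ m, Φ (x : X) (σ m) ∈ (fun t => Φ (x : X) t) '' Set.Icc 0 L ∩ S := by
      intro m
      refine ⟨⟨σ m, ⟨hσ0 x m, hσle m⟩, rfl⟩, ?_⟩
      rw [hflow_hit x m]; exact ((Pr.toEquiv ^ m) x).2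
    have hpK : p ∈ (fun t => Φ (x : X) t) '' Set.Icc 0 L ∩ S :=
      hK.isClosed.mem_of_tendsto hptend (Filter.Eventually.of_forall hmemK)
    have hpS : p ∈ S := hpK.2
    obtain ⟨δp, δm, hsign, hloc⟩ := hgs.transversal.trans
    obtain ⟨U, hUopen, hpU, -, -, -, V, hVU, hVopen, hpV, δ, hδpos, hVprop⟩ := hloc p hpS
    -- eventually the iterates land in V
    have hev1 : ∀ᶠ m in Filter.atTop, Φ (x : X) (σ m) ∈ V :=
      hptend.eventually (hVopen.mem_nhds hpV)
    -- the gaps tend to zero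
    have htend' : Filter.Tendsto (fun m => σ (m+1)) Filter.atTop (nhds L) :=
      htend.comp (Filter.tendsto_add_atTop_nat 1)
    have hgap : Filter.Tendsto (fun m => σ (m+1) - σ m) Filter.atTop (nhds 0) := by
      have := htend'.sub htend
      simpa using this
    have hev2 : ∀ᶠ m in Filter.atTop, σ (m+1) - σ m < δ :=
      (hgap.eventually (eventually_lt_nhds hδpos))
    obtain ⟨m, hmV, hmδ⟩ := (hev1.and hev2).exists
    set y : ↥S := (Pr.toEquiv ^ m) x with hy
    have hycoe : (y : X) = Φ (x : X) (σ m) := (hflow_hit x m).symm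
    have hTy : T (y : X) = σ (m+1) - σ m := by simp [hσdef, hitTimes, hy]
    have hyV : (y : X) ∈ V ∩ S := ⟨hycoe ▸ hmV, y.2⟩
    obtain ⟨hδp, hδm⟩ := hVprop _ hyV
    obtain ⟨U', -, -, -, hIcc, -, -⟩ := hloc (y : X) y.2
    have hTpos := (hT _ y.2).1
    have : Φ (y : X) (T (y : X)) ∈ U' \ S := by
      refine hIcc _ ⟨?_, ?_⟩ (ne_of_gt hTpos)
      · linarith
      · rw [hTy]; linarith
    exact this.2 (hT _ y.2).2.1
  -- every point of X is Φ y τ for a section point y and 0 ≤ τ < T y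
  have hrep : ∀ z : X, ∃ (y : ↥S) (τ : ℝ), 0 ≤ τ ∧ τ < T (y : X) ∧ Φ (y : X) τ = z := by
    intro z
    obtain ⟨t, ht, hmem⟩ := hgs.backward z
    set x : ↥S := ⟨Φ z t, hmem⟩ with hx
    have hz : Φ (x : X) (-t) = z := by
      show Φ (Φ z t) (-t) = z
      rw [law.map_add]; simp [law.map_zero]
    set σ := hitTimes T Pr x with hσdef
    have hex := hdiv x (-t)
    have hNpos : Nat.find hex ≠ 0 := by
      intro h0
      have hsp := Nat.find_spec hex
      rw [h0] at hsp
      have : -t < 0 := by simpa [hσdef, hitTimes] using hsp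
      linarith
    obtain ⟨m, hm⟩ := Nat.exists_eq_succ_of_ne_zero hNpos
    have hlt : -t < σ (m+1) := by
      have := Nat.find_spec hex
      rwa [hm] at this
    have hge : σ m ≤ -t := by
      by_contra h
      push_neg at h
      exact Nat.find_min hex (by omega : m < Nat.find hex) h
    refine ⟨(Pr.toEquiv ^ m) x, -t - σ m, by linarith, ?_, ?_⟩
    · have : σ (m+1) = σ m + T (((Pr.toEquiv ^ m) x : ↥S) : X) := rfl
      linarith [this ▸ hlt]
    · rw [← hflow_hit x m, law.map_add]
      rw [show σ m + (-t - σ m) = -t by ring]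
      exact hz
  -- injectivity on canonical representatives
  have hcore : ∀ (x y : ↥S) (a b : ℝ), 0 ≤ a → 0 ≤ b → b < T (y : X) → a ≤ b →
      Φ (x : X) a = Φ (y : X) b → (x : X) = (y : X) ∧ a = b := by
    intro x y a b ha hb hbT hab heq
    have hx' : (x : X) = Φ (y : X) (b - a) := by
      have h1 : Φ (Φ (x : X) a) (-a) = (x : X) := by
        rw [law.map_add]; simp [law.map_zero]
      rw [heq, law.map_add] at h1
      rw [← h1]; ring_nf
    rcases eq_or_lt_of_le (show (0:ℝ) ≤ b - a by linarith) with h0 | h0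
    · have hab' : a = b := by linarith
      subst hab'
      simp only [sub_self] at hx'
      rw [law.map_zero] at hx'
      exact ⟨hx', rfl⟩
    · exfalso
      have := (hT _ y.2).2.2 (b - a) ⟨h0, by linarith⟩
      exact this (hx' ▸ x.2)
  -- the map k
  set g : ↥S × ℝ → X := fun p =>
    Φ (((Pr.toEquiv ^ ⌊p.2⌋) p.1 : ↥S) : X)
      ((p.2 - ⌊p.2⌋) * T (((Pr.toEquiv ^ ⌊p.2⌋) p.1 : ↥S) : X)) with hgdef
  have hgwd : ∀ p q : ↥S × ℝ, MTRel Pr p q → g p = g q := by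
    rintro ⟨x, t⟩ ⟨x', t'⟩ ⟨h1, h2⟩
    simp only at h1 h2
    subst h2
    have hfl : ⌊t - (1:ℝ)⌋ = ⌊t⌋ - 1 := by exact_mod_cast Int.floor_sub_intCast t 1
    have hpw : (Pr.toEquiv ^ (⌊t⌋ - 1)) x' = (Pr.toEquiv ^ ⌊t⌋) x := by
      rw [h1]
      show (Pr.toEquiv ^ (⌊t⌋ - 1)) (Pr.toEquiv x) = _
      rw [← Equiv.Perm.mul_apply, zpow_sub_one]
      group
    simp only [hgdef, hfl, hpw]
    congr 2
    push_cast; ring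
  have hk : ∀ (x : ↥S) (t : ℝ), 0 ≤ t → t < 1 → g (x, t) = Φ (x : X) (t * T (x : X)) := by
    intro x t h0 h1
    have hfl : ⌊t⌋ = 0 := Int.floor_eq_zero_iff.mpr ⟨h0, h1⟩
    simp [hgdef, hfl, Int.fract_eq_self.mpr ⟨h0, h1⟩]
  -- canonical representatives in the mapping torus
  have hcan : ∀ (x : ↥S) (t : ℝ) (m : ℤ),
      Quot.mk (MTRel Pr) (x, t) = Quot.mk (MTRel Pr) ((Pr.toEquiv ^ m) x, t - m) := by
    intro x t m
    induction m using Int.induction_on with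
    | zero => simp
    | succ i ih =>
      rw [ih]
      have h1 : (Pr.toEquiv ^ ((i:ℤ)+1)) x = Pr ((Pr.toEquiv ^ (i:ℤ)) x) := by
        rw [add_comm, zpow_add, zpow_one, Equiv.Perm.mul_apply]; rfl
      have hs := Quot.sound (r := MTRel Pr)
        (show MTRel Pr ((Pr.toEquiv ^ (i:ℤ)) x, t - ((i:ℤ):ℝ))
          ((Pr.toEquiv ^ ((i:ℤ)+1)) x, t - (((i:ℤ)+1 : ℤ):ℝ)) from
          ⟨h1, by push_cast; ring⟩)
      convert hs using 3 <;> push_cast <;> ring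
    | pred i ih =>
      rw [ih]
      have h1 : (Pr.toEquiv ^ (-(i:ℤ))) x = Pr ((Pr.toEquiv ^ (-(i:ℤ)-1)) x) := by
        have hmul : (Pr.toEquiv : Equiv.Perm ↥S) * Pr.toEquiv ^ (-(i:ℤ)-1)
            = Pr.toEquiv ^ (-(i:ℤ)) := by group
        rw [← hmul, Equiv.Perm.mul_apply]
        rfl
      have hs := Quot.sound (r := MTRel Pr)
        (show MTRel Pr ((Pr.toEquiv ^ (-(i:ℤ)-1)) x, t - ((-(i:ℤ)-1 : ℤ):ℝ))
          ((Pr.toEquiv ^ (-(i:ℤ))) x, t - ((-(i:ℤ) : ℤ):ℝ)) from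
          ⟨h1, by push_cast; ring⟩)
      have hgoal := hs.symm
      convert hgoal using 3 <;> push_cast <;> ring
  refine ⟨Quot.lift g hgwd, ?_, ?_, ?_⟩
  · intro x t h0 h1
    exact hk x t h0 h1
  · -- injective
    intro a b hab
    induction a using Quot.ind with | _ p => ?_
    induction b using Quot.ind with | _ q => ?_
    obtain ⟨x1, t1⟩ := p
    obtain ⟨x2, t2⟩ := q
    rw [hcan x1 t1 ⌊t1⌋, hcan x2 t2 ⌊t2⌋] at hab ⊢
    set y1 : ↥S := (Pr.toEquiv ^ ⌊t1⌋) x1 with hy1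
    set y2 : ↥S := (Pr.toEquiv ^ ⌊t2⌋) x2 with hy2
    set s1 : ℝ := t1 - ⌊t1⌋ with hs1
    set s2 : ℝ := t2 - ⌊t2⌋ with hs2
    have hs10 : 0 ≤ s1 := by rw [hs1, Int.self_sub_floor]; exact Int.fract_nonneg t1
    have hs11 : s1 < 1 := by rw [hs1, Int.self_sub_floor]; exact Int.fract_lt_one t1
    have hs20 : 0 ≤ s2 := by rw [hs2, Int.self_sub_floor]; exact Int.fract_nonneg t2
    have hs21 : s2 < 1 := by rw [hs2, Int.self_sub_floor]; exact Int.fract_lt_one t2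
    have hT1 := (hT _ y1.2).1
    have hT2 := (hT _ y2.2).1
    have hab' : Φ (y1 : X) (s1 * T (y1 : X)) = Φ (y2 : X) (s2 * T (y2 : X)) := by
      have e1 := hk y1 s1 hs10 hs11
      have e2 := hk y2 s2 hs20 hs21
      rw [← e1, ← e2]
      exact hab
    have ha0 : 0 ≤ s1 * T (y1 : X) := mul_nonneg hs10 hT1.le
    have hb0 : 0 ≤ s2 * T (y2 : X) := mul_nonneg hs20 hT2.le
    have haT : s1 * T (y1 : X) < T (y1 : X) := by nlinarith
    have hbT : s2 * T (y2 : X) < T (y2 : X) := by nlinarith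
    have hkey : (y1 : X) = (y2 : X) ∧ s1 * T (y1 : X) = s2 * T (y2 : X) := by
      rcases le_total (s1 * T (y1 : X)) (s2 * T (y2 : X)) with hle | hle
      · exact hcore y1 y2 _ _ ha0 hb0 hbT hle hab'
      · obtain ⟨h1, h2⟩ := hcore y2 y1 _ _ hb0 ha0 haT hle hab'.symm
        exact ⟨h1.symm, h2.symm⟩
    have hyeq : y1 = y2 := Subtype.coe_injective hkey.1
    have hseq : s1 = s2 := by
      have h := hkey.2
      rw [hyeq] at h
      exact mul_right_cancel₀ (ne_of_gt hT2) h
    rw [hyeq, hseq]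
  · -- surjective
    intro z
    obtain ⟨y, τ, h0, hlt, hz⟩ := hrep z
    have hTpos := (hT _ y.2).1
    refine ⟨Quot.mk _ (y, τ / T (y : X)), ?_⟩
    show g (y, τ / T (y : X)) = z
    rw [hk y _ (div_nonneg h0 hTpos.le) ((div_lt_one hTpos).mpr hlt),
      div_mul_cancel₀ _ (ne_of_gt hTpos)]
    exact hz
end

section
/- Let (Φ,X) be a flow with global Poincaré section S. Define k([x,t]) := Φ(x, t·T_Φ(x)) and τ([x,t],s) := ∫₀^{s+t} R_Φ(x)(u) du − t·T_Φ(x), where R_Φ(x)(u) := ∑_{i∈ℤ} T_Φ((PΦ)^i(x))·χ_{[i,i+1)}(u). Then for all x ∈ S, 0 ≤ t < 1, and s ∈ ℝ: k(ΣPΦ([x,t],s)) = Φ(k([x,t]), τ([x,t],s)); that is, (k,τ) is a weak morphism from the suspension of the Poincaré map to the original flow. -/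
open Set Function Topology

open MeasureTheory

section A
variable {X : Type*} [TopologicalSpace X] {S : Set X}

private lemma equiv_zpow_add_one (Pr : ↥S ≃ₜ ↥S) (n : ℤ) (x : ↥S) :
    (Pr.toEquiv ^ (n + 1)) x = (Pr.toEquiv ^ n) (Pr x) := by
  rw [zpow_add_one]
  simp [Equiv.Perm.mul_apply]

private lemma rfun_shift (T : X → ℝ) (Pr : ↥S ≃ₜ ↥S) (x : ↥S) (u : ℝ) :
    Rfun T Pr x (u + 1) = Rfun T Pr (Pr x) u := by
  unfold Rfun
  rw [Int.floor_add_one, equiv_zpow_add_one]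

private lemma rfun_measurable (T : X → ℝ) (Pr : ↥S ≃ₜ ↥S) (x : ↥S) :
    Measurable (Rfun T Pr x) := by
  have h : Rfun T Pr x = (fun n : ℤ => T (((Pr.toEquiv ^ n) x : ↥S) : X)) ∘ Int.floor := rfl
  rw [h]
  exact measurable_from_top.comp Int.measurable_floor

end A
section B
variable {X : Type*} [TopologicalSpace X] {S : Set X}

private lemma rfun_integrableOn (T : X → ℝ) (Pr : ↥S ≃ₜ ↥S) (x : ↥S) {a b : ℝ} (hab : a ≤ b) :
    IntegrableOn (Rfun T Pr x) (Set.Ioc a b) := by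
  have hne : (Finset.Icc ⌊a⌋ ⌊b⌋).Nonempty := by
    rw [Finset.nonempty_Icc]; exact Int.floor_le_floor hab
  set C := (Finset.Icc ⌊a⌋ ⌊b⌋).sup' hne (fun i => |T (((Pr.toEquiv ^ i) x : ↥S) : X)|) with hC
  refine MeasureTheory.Measure.integrableOn_of_bounded (M := C) measure_Ioc_lt_top.ne
    ((rfun_measurable T Pr x).aestronglyMeasurable) ?_
  filter_upwards [MeasureTheory.ae_restrict_mem measurableSet_Ioc] with u hu
  have hmem : ⌊u⌋ ∈ Finset.Icc ⌊a⌋ ⌊b⌋ := by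
    rw [Finset.mem_Icc]
    exact ⟨Int.floor_le_floor hu.1.le, Int.floor_le_floor hu.2⟩
  calc ‖Rfun T Pr x u‖ = |T (((Pr.toEquiv ^ ⌊u⌋) x : ↥S) : X)| := by rfl
    _ ≤ C := Finset.le_sup' (fun i => |T (((Pr.toEquiv ^ i) x : ↥S) : X)|) hmem

private lemma rfun_intInt (T : X → ℝ) (Pr : ↥S ≃ₜ ↥S) (x : ↥S) (a b : ℝ) :
    IntervalIntegrable (Rfun T Pr x) volume a b := by
  rcases le_total a b with h | h
  · exact ⟨rfun_integrableOn T Pr x h,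
      by rw [Set.Ioc_eq_empty (not_lt.2 h)]; exact integrableOn_empty⟩
  · exact ⟨by rw [Set.Ioc_eq_empty (not_lt.2 h)]; exact integrableOn_empty,
      rfun_integrableOn T Pr x h⟩

private lemma rfun_integral_const (T : X → ℝ) (Pr : ↥S ≃ₜ ↥S) (x : ↥S) (n : ℤ)
    {a b : ℝ} (hna : (n:ℝ) ≤ a) (hab : a ≤ b) (hb : b ≤ (n:ℝ) + 1) :
    ∫ u in a..b, Rfun T Pr x u = (b - a) * T (((Pr.toEquiv ^ n) x : ↥S) : X) := by
  have h1 : ∫ u in a..b, Rfun T Pr x u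
      = ∫ u in a..b, T (((Pr.toEquiv ^ n) x : ↥S) : X) := by
    apply intervalIntegral.integral_congr_ae
    have h0 : ({((n:ℝ)+1)}ᶜ : Set ℝ) ∈ MeasureTheory.ae volume :=
      compl_mem_ae_iff.2 (measure_singleton _)
    filter_upwards [h0] with u hu hu'
    rw [Set.uIoc_of_le hab] at hu'
    have hne : u ≠ (n:ℝ) + 1 := by simpa using hu
    have hfl : ⌊u⌋ = n := by
      rw [Int.floor_eq_iff]
      exact ⟨hna.trans hu'.1.le, lt_of_le_of_ne (hu'.2.trans hb) hne⟩
    unfold Rfun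
    rw [hfl]
  rw [h1, intervalIntegral.integral_const, smul_eq_mul]

end B
section C
variable {X : Type*} [TopologicalSpace X] {S : Set X}

private lemma cont_zpow_apply (Pr : ↥S ≃ₜ ↥S) (n : ℤ) :
    Continuous fun x : ↥S => (Pr.toEquiv ^ n) x := by
  induction n using Int.induction_on with
  | zero => simpa using continuous_id'
  | succ n ih =>
      exact (ih.comp Pr.continuous).congr fun x => (equiv_zpow_add_one Pr n x).symm
  | pred n ih =>
      refine (ih.comp Pr.symm.continuous).congr fun x => ?_
      have h := equiv_zpow_add_one Pr (-(n:ℤ) - 1) (Pr.symm x)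
      rw [sub_add_cancel, Pr.apply_symm_apply] at h
      exact h

private lemma cont_T_pow (T : X → ℝ) (hTc : ContinuousOn T S) (Pr : ↥S ≃ₜ ↥S) (n : ℤ) :
    Continuous fun x : ↥S => T (((Pr.toEquiv ^ n) x : ↥S) : X) :=
  hTc.restrict.comp (cont_zpow_apply Pr n)

private lemma cont_c (T : X → ℝ) (hTc : ContinuousOn T S) (Pr : ↥S ≃ₜ ↥S) (n : ℤ) :
    Continuous fun x : ↥S => ∫ u in (0:ℝ)..(n:ℝ), Rfun T Pr x u := by
  induction n using Int.induction_on with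
  | zero => simpa using continuous_const
  | succ n ih =>
      have key : ∀ x : ↥S, ∫ u in (0:ℝ)..(((n:ℤ)+1 : ℤ):ℝ), Rfun T Pr x u =
          (∫ u in (0:ℝ)..((n:ℤ):ℝ), Rfun T Pr x u)
            + T (((Pr.toEquiv ^ (n:ℤ)) x : ↥S) : X) := by
        intro x
        have hadd := intervalIntegral.integral_add_adjacent_intervals
          (rfun_intInt T Pr x 0 (n:ℝ)) (rfun_intInt T Pr x (n:ℝ) ((n:ℝ)+1))
        have hc := rfun_integral_const T Pr x (n:ℤ) (a := (n:ℝ)) (b := (n:ℝ)+1)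
          (by push_cast; exact le_rfl) (by linarith) (by push_cast; exact le_rfl)
        push_cast
        rw [← hadd,
          show (∫ u in (n:ℝ)..((n:ℝ)+1), Rfun T Pr x u)
            = T (((Pr.toEquiv ^ (n:ℤ)) x : ↥S) : X) from by rw [hc]; ring]
      exact (ih.add (cont_T_pow T hTc Pr n)).congr fun x => (key x).symm
  | pred n ih =>
      have key : ∀ x : ↥S, ∫ u in (0:ℝ)..((-(n:ℤ)-1 : ℤ):ℝ), Rfun T Pr x u =
          (∫ u in (0:ℝ)..((-(n:ℤ) : ℤ):ℝ), Rfun T Pr x u)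
            - T (((Pr.toEquiv ^ (-(n:ℤ)-1)) x : ↥S) : X) := by
        intro x
        have hadd := intervalIntegral.integral_add_adjacent_intervals
          (rfun_intInt T Pr x 0 (-(n:ℝ)-1)) (rfun_intInt T Pr x (-(n:ℝ)-1) (-(n:ℝ)))
        have hc := rfun_integral_const T Pr x (-(n:ℤ)-1) (a := -(n:ℝ)-1) (b := -(n:ℝ))
          (by push_cast; exact le_rfl) (by linarith) (by push_cast; linarith)
        push_cast
        rw [eq_sub_iff_add_eq,
          show T (((Pr.toEquiv ^ (-(n:ℤ)-1)) x : ↥S) : X)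
            = ∫ u in (-(n:ℝ)-1)..(-(n:ℝ)), Rfun T Pr x u from by rw [hc]; ring]
        exact hadd
      exact (ih.sub (cont_T_pow T hTc Pr (-(n:ℤ)-1))).congr fun x => (key x).symm

private lemma g_shift (T : X → ℝ) (Pr : ↥S ≃ₜ ↥S) (x : ↥S) (t : ℝ) :
    ∫ u in (0:ℝ)..t, Rfun T Pr x u
      = T (x : X) + ∫ u in (0:ℝ)..(t - 1), Rfun T Pr (Pr x) u := by
  have h2 : ∫ u in (0:ℝ)..(t-1), Rfun T Pr (Pr x) u = ∫ u in (1:ℝ)..t, Rfun T Pr x u := by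
    have h : ∀ u, Rfun T Pr (Pr x) u = Rfun T Pr x (u + 1) :=
      fun u => (rfun_shift T Pr x u).symm
    simp_rw [h]
    rw [intervalIntegral.integral_comp_add_right]
    norm_num
  rw [h2, ← intervalIntegral.integral_add_adjacent_intervals (rfun_intInt T Pr x 0 1)
    (rfun_intInt T Pr x 1 t)]
  congr 1
  have h := rfun_integral_const T Pr x 0 (a := 0) (b := 1) (by norm_num) (by norm_num)
    (by norm_num)
  simpa using h

end C

/-- with `k([x,t]) = Φ(x, t·T(x))` and
`τ([x,t],s) = ∫₀^{s+t} R_Φ(x)(u) du − t·T(x)`, one has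
`k(ΣPΦ([x,t],s)) = Φ(k([x,t]), τ([x,t],s))` for all `x ∈ S`, `0 ≤ t < 1`, `s ∈ ℝ`;
together with continuity of `k`, `(k,τ)` is a weak morphism from the suspension of the
Poincaré map to the original flow. -/
theorem torus_to_flow_weak_morphism {X : Type*} [TopologicalSpace X] [T2Space X]
    [SecondCountableTopology X] {n : ℕ} (Φ : X → ℝ → X) (S : Set X)
    (law : FlowLaw Φ) (hgs : IsGlobalSection n Φ S)
    (T : X → ℝ) (hT : IsFirstReturn Φ S T) (hTc : ContinuousOn T S)
    (Pr : ↥S ≃ₜ ↥S) (hPr : ∀ x : ↥S, (Pr x : X) = Φ x (T x)) :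
    ∃ k : MappingTorus Pr → X,
      (∀ (x : ↥S) (t : ℝ), 0 ≤ t → t < 1 → k (mtk Pr x t) = Φ x (t * T x)) ∧
      Continuous k ∧
      ∀ (x : ↥S) (t : ℝ), 0 ≤ t → t < 1 → ∀ s : ℝ,
        k (susp Pr (mtk Pr x t) s) = Φ (k (mtk Pr x t)) (tauTime T Pr x t s)   := by
  classical
  set g : ↥S → ℝ → ℝ := fun x t => ∫ u in (0:ℝ)..t, Rfun T Pr x u with hg
  have hgt0 : ∀ (x : ↥S) (t : ℝ), 0 ≤ t → t ≤ 1 → g x t = t * T (x : X) := by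
    intro x t h0 h1
    have h := rfun_integral_const T Pr x 0 (a := 0) (b := t) (by norm_num) h0
      (by norm_num; linarith)
    simpa [hg] using h
  have hresp : ∀ a b : ↥S × ℝ, MTRel Pr a b →
      Φ ((a.1 : ↥S) : X) (g a.1 a.2) = Φ ((b.1 : ↥S) : X) (g b.1 b.2) := by
    rintro ⟨x, t⟩ ⟨y, s'⟩ ⟨h1, h2⟩
    dsimp only at h1 h2 ⊢
    subst h1; subst h2
    rw [hPr, law.map_add]
    congr 1
    simpa [hg] using g_shift T Pr x t
  refine ⟨Quot.lift (fun p : ↥S × ℝ => Φ ((p.1 : ↥S) : X) (g p.1 p.2)) hresp, ?_, ?_, ?_⟩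
  · intro x t h0 h1
    show Φ (x : X) (g x t) = Φ (x : X) (t * T (x : X))
    rw [hgt0 x t h0 h1.le]
  · apply continuous_quot_lift
    have contg : Continuous fun p : ↥S × ℝ => g p.1 p.2 := by
      have hlf : LocallyFinite
          fun n : ℤ => (Prod.snd ⁻¹' Set.Icc (n:ℝ) ((n:ℝ)+1) : Set (↥S × ℝ)) := by
        refine LocallyFinite.preimage_continuous ?_ continuous_snd
        intro t
        refine ⟨Set.Ioo (t-1) (t+1), Ioo_mem_nhds (by linarith) (by linarith), ?_⟩
        refine Set.Finite.subset (Set.finite_Icc (⌈t-2⌉) (⌊t+1⌋)) ?_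
        rintro n ⟨u, ⟨hn1, hn2⟩, hu1, hu2⟩
        rw [Set.mem_Icc]
        exact ⟨Int.ceil_le.2 (by linarith), Int.le_floor.2 (by linarith)⟩
      refine hlf.continuous ?_ (fun n => isClosed_Icc.preimage continuous_snd) ?_
      · ext p
        simp only [Set.mem_iUnion, Set.mem_preimage, Set.mem_Icc, Set.mem_univ, iff_true]
        exact ⟨⌊p.2⌋, Int.floor_le _, (Int.lt_floor_add_one _).le⟩
      · intro n
        have heq : Set.EqOn (fun p : ↥S × ℝ => g p.1 p.2)
            (fun p : ↥S × ℝ => (∫ u in (0:ℝ)..(n:ℝ), Rfun T Pr p.1 u)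
              + (p.2 - (n:ℝ)) * T (((Pr.toEquiv ^ n) p.1 : ↥S) : X))
            (Prod.snd ⁻¹' Set.Icc (n:ℝ) ((n:ℝ)+1)) := by
          rintro ⟨x, t⟩ hp
          obtain ⟨h1, h2⟩ := hp
          dsimp only
          rw [hg]
          dsimp only
          rw [← intervalIntegral.integral_add_adjacent_intervals
            (rfun_intInt T Pr x 0 (n:ℝ)) (rfun_intInt T Pr x (n:ℝ) t)]
          congr 1
          exact rfun_integral_const T Pr x n le_rfl h1 h2
        refine ContinuousOn.congr ?_ heq
        refine Continuous.continuousOn ?_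
        exact ((cont_c T hTc Pr n).comp continuous_fst).add
          (((continuous_snd.sub continuous_const)).mul
            ((cont_T_pow T hTc Pr n).comp continuous_fst))
    exact law.cont.comp ((continuous_subtype_val.comp continuous_fst).prodMk contg)
  · intro x t h0 h1 s
    show Φ (x : X) (g x (t + s)) = Φ (Φ (x : X) (g x t)) (tauTime T Pr x t s)
    rw [hgt0 x t h0 h1.le, law.map_add]
    congr 1
    have htau : tauTime T Pr x t s = g x (s + t) - t * T (x : X) := by
      rw [tauTime, hg]
    rw [htau, add_comm t s]
    ring
end

section
/- Let (Φ,X) be a flow with global Poincaré section S, and τ([x,t],s) := ∫₀^{s+t} R_Φ(x)(u) du − t·T_Φ(x) with R_Φ(x)(u) := ∑_{i∈ℤ} T_Φ((PΦ)^i(x))·χ_{[i,i+1)}(u). Then for each fixed [x,t], the map s ↦ τ([x,t],s) is a strictly increasing homeomorphism of ℝ with τ([x,t],0) = 0. -/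
open Set Function Topology MeasureTheory intervalIntegral

lemma tau_aux_meas (g : ℤ → ℝ) : Measurable fun u : ℝ => g ⌊u⌋ :=
  measurable_from_top.comp Int.measurable_floor

lemma tau_aux_int (g : ℤ → ℝ) (a b : ℝ) :
    IntervalIntegrable (fun u : ℝ => g ⌊u⌋) volume a b := by
  set C : ℝ := ∑ i ∈ Finset.Icc ⌊a ⊓ b⌋ ⌊a ⊔ b⌋, |g i| with hC
  refine (_root_.intervalIntegrable_const (c := C)).mono_fun
    ((tau_aux_meas g).aestronglyMeasurable.restrict) ?_
  filter_upwards [ae_restrict_mem measurableSet_uIoc] with u hu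
  have hu' : u ∈ Set.Icc (a ⊓ b) (a ⊔ b) := Ioc_subset_Icc_self (by
    simpa [Set.uIoc, inf_comm, sup_comm] using hu)
  have hmem : ⌊u⌋ ∈ Finset.Icc ⌊a ⊓ b⌋ ⌊a ⊔ b⌋ :=
    Finset.mem_Icc.2 ⟨Int.floor_le_floor hu'.1, Int.floor_le_floor hu'.2⟩
  have h1 : |g ⌊u⌋| ≤ C :=
    Finset.single_le_sum (fun i _ => abs_nonneg (g i)) hmem
  have hCnn : 0 ≤ C := Finset.sum_nonneg fun i _ => abs_nonneg (g i)
  simpa [Real.norm_eq_abs, abs_of_nonneg hCnn] using h1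

lemma tau_aux_unit (g : ℤ → ℝ) (i : ℤ) :
    ∫ u in (i : ℝ)..((i : ℝ) + 1), g ⌊u⌋ = g i := by
  have h0 : ∀ᵐ u : ℝ, u ≠ (i : ℝ) + 1 := by
    refine ae_iff.2 ?_
    simp
  have h : ∀ᵐ u : ℝ, u ∈ Set.uIoc (i : ℝ) ((i : ℝ) + 1) → g ⌊u⌋ = g i := by
    filter_upwards [h0] with u hu h
    have hmem : u ∈ Set.Ioc (i : ℝ) ((i : ℝ) + 1) := by
      rwa [Set.uIoc_of_le (by linarith)] at h
    have : ⌊u⌋ = i := Int.floor_eq_iff.2 ⟨hmem.1.le, lt_of_le_of_ne hmem.2 hu⟩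
    rw [this]
  rw [intervalIntegral.integral_congr_ae h]
  simp

lemma tau_aux_sum (g : ℤ → ℝ) (n : ℤ) (m : ℕ) :
    ∫ u in (n : ℝ)..((n : ℝ) + m), g ⌊u⌋ = ∑ k ∈ Finset.range m, g (n + k) := by
  induction m with
  | zero => simp
  | succ m ih =>
    have hadj := intervalIntegral.integral_add_adjacent_intervals
      (tau_aux_int g (n : ℝ) ((n : ℝ) + m)) (tau_aux_int g ((n : ℝ) + m) ((n : ℝ) + m + 1))
    have hunit : ∫ u in ((n : ℝ) + m)..(((n : ℝ) + m) + 1), g ⌊u⌋ = g (n + m) := by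
      have := tau_aux_unit g (n + m)
      push_cast at this
      exact this
    push_cast
    rw [show (n : ℝ) + (m + 1) = ((n : ℝ) + m) + 1 by ring, ← hadj, ih, hunit,
      Finset.sum_range_succ]

lemma tau_aux_pos (g : ℤ → ℝ) (hg : ∀ i, 0 < g i) {a b : ℝ} (hab : a < b) :
    0 < ∫ u in a..b, g ⌊u⌋ :=
  intervalIntegral.intervalIntegral_pos_of_pos_on (tau_aux_int g a b)
    (fun u _ => hg ⌊u⌋) hab

lemma tau_key_fwd {X : Type*} [TopologicalSpace X] [T2Space X]
    (Φ : X → ℝ → X) (S : Set X) (law : FlowLaw Φ)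
    (hcompact : ∀ y : X, ∀ a b : ℝ, IsCompact ((fun t => Φ y t) '' Set.Icc a b ∩ S))
    (havoid : ∀ y ∈ S, ∃ δp δm : ℝ, δm < 0 ∧ 0 < δp ∧
      ∀ t ∈ Set.Icc δm δp, t ≠ 0 → Φ y t ∉ S)
    (x0 : X) (t : ℕ → ℝ) (hmono : StrictMono t) (hS : ∀ N, Φ x0 (t N) ∈ S) :
    ¬BddAbove (Set.range t) := by
  intro hbdd
  set L : ℝ := ⨆ N, t N with hL
  have htend : Filter.Tendsto t Filter.atTop (𝓝 L) :=
    tendsto_atTop_ciSup hmono.monotone hbdd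
  have hlt : ∀ N, t N < L := fun N =>
    lt_of_lt_of_le (hmono (Nat.lt_succ_self N)) (le_ciSup hbdd (N + 1))
  have contflow : Continuous fun s : ℝ => Φ x0 s :=
    law.cont.comp (continuous_const.prodMk continuous_id)
  have hy : Filter.Tendsto (fun N => Φ x0 (t N)) Filter.atTop (𝓝 (Φ x0 L)) :=
    (contflow.tendsto L).comp htend
  have hK := hcompact x0 (t 0) L
  have hmem : ∀ N, Φ x0 (t N) ∈ (fun s => Φ x0 s) '' Set.Icc (t 0) L ∩ S := fun N =>
    ⟨⟨t N, ⟨hmono.monotone (Nat.zero_le N), (hlt N).le⟩, rfl⟩, hS N⟩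
  have hyK : Φ x0 L ∈ (fun s => Φ x0 s) '' Set.Icc (t 0) L ∩ S :=
    hK.isClosed.mem_of_tendsto hy (Filter.Eventually.of_forall hmem)
  obtain ⟨δp, δm, hδm, hδp, hav⟩ := havoid _ hyK.2
  obtain ⟨N, hN⟩ : ∃ N, L + δm < t N :=
    (htend.eventually (eventually_gt_nhds (show L + δm < L by linarith))).exists
  have ht' : t N - L ∈ Set.Icc δm δp := ⟨by linarith, by linarith [hlt N]⟩
  have := hav _ ht' (by have := hlt N; intro h; rw [sub_eq_zero] at h; exact absurd h this.ne)
  apply this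
  have : Φ (Φ x0 L) (t N - L) = Φ x0 (t N) := by
    rw [law.map_add]; ring_nf
  rw [this]; exact hS N

lemma tau_key_bwd {X : Type*} [TopologicalSpace X] [T2Space X]
    (Φ : X → ℝ → X) (S : Set X) (law : FlowLaw Φ)
    (hcompact : ∀ y : X, ∀ a b : ℝ, IsCompact ((fun t => Φ y t) '' Set.Icc a b ∩ S))
    (havoid : ∀ y ∈ S, ∃ δp δm : ℝ, δm < 0 ∧ 0 < δp ∧
      ∀ t ∈ Set.Icc δm δp, t ≠ 0 → Φ y t ∉ S)
    (x0 : X) (t : ℕ → ℝ) (hanti : StrictAnti t) (hS : ∀ N, Φ x0 (t N) ∈ S) :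
    ¬BddBelow (Set.range t) := by
  intro hbdd
  set L : ℝ := ⨅ N, t N with hL
  have htend : Filter.Tendsto t Filter.atTop (𝓝 L) :=
    tendsto_atTop_ciInf hanti.antitone hbdd
  have hlt : ∀ N, L < t N := fun N =>
    lt_of_le_of_lt (ciInf_le hbdd (N + 1)) (hanti (Nat.lt_succ_self N))
  have contflow : Continuous fun s : ℝ => Φ x0 s :=
    law.cont.comp (continuous_const.prodMk continuous_id)
  have hy : Filter.Tendsto (fun N => Φ x0 (t N)) Filter.atTop (𝓝 (Φ x0 L)) :=
    (contflow.tendsto L).comp htend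
  have hK := hcompact x0 L (t 0)
  have hmem : ∀ N, Φ x0 (t N) ∈ (fun s => Φ x0 s) '' Set.Icc L (t 0) ∩ S := fun N =>
    ⟨⟨t N, ⟨(hlt N).le, hanti.antitone (Nat.zero_le N)⟩, rfl⟩, hS N⟩
  have hyK : Φ x0 L ∈ (fun s => Φ x0 s) '' Set.Icc L (t 0) ∩ S :=
    hK.isClosed.mem_of_tendsto hy (Filter.Eventually.of_forall hmem)
  obtain ⟨δp, δm, hδm, hδp, hav⟩ := havoid _ hyK.2
  obtain ⟨N, hN⟩ : ∃ N, t N < L + δp :=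
    (htend.eventually (eventually_lt_nhds (show L < L + δp by linarith))).exists
  have ht' : t N - L ∈ Set.Icc δm δp := ⟨by linarith [hlt N], by linarith⟩
  have := hav _ ht' (by have := hlt N; intro h; rw [sub_eq_zero] at h; exact absurd h this.ne')
  apply this
  have : Φ (Φ x0 L) (t N - L) = Φ x0 (t N) := by
    rw [law.map_add]; ring_nf
  rw [this]; exact hS N

/-- for each `x ∈ S` and `0 ≤ t < 1`, the map
`s ↦ τ([x,t],s) = ∫₀^{s+t} R_Φ(x)(u) du − t·T(x)` is a strictly increasing
homeomorphism of `ℝ` with `τ([x,t],0) = 0`. -/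
theorem tauTime_increasing_homeomorph {X : Type*} [TopologicalSpace X] [T2Space X]
    [SecondCountableTopology X] {n : ℕ} (Φ : X → ℝ → X) (S : Set X)
    (law : FlowLaw Φ) (hgs : IsGlobalSection n Φ S)
    (T : X → ℝ) (hT : IsFirstReturn Φ S T) (hTc : ContinuousOn T S)
    (Pr : ↥S ≃ₜ ↥S) (hPr : ∀ x : ↥S, (Pr x : X) = Φ x (T x))
    (x : ↥S) (t : ℝ) (ht0 : 0 ≤ t) (ht1 : t < 1) :
    StrictMono (fun s => tauTime T Pr x t s) ∧
    Continuous (fun s => tauTime T Pr x t s) ∧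
    Function.Surjective (fun s => tauTime T Pr x t s) ∧
    tauTime T Pr x t 0 = 0 := by
  classical
  -- the sequence of return times along the orbit of x
  set g : ℤ → ℝ := fun i => T (((Pr.toEquiv ^ i) x : ↥S) : X) with hg
  have hRf : Rfun T Pr x = fun u => g ⌊u⌋ := rfl
  have hgpos : ∀ i, 0 < g i := fun i =>
    (hT _ (Subtype.coe_prop ((Pr.toEquiv ^ i) x))).1
  have hg0 : g 0 = T (x : X) := by simp [hg]
  -- avoidance data extracted from transversality
  have havoid : ∀ y ∈ S, ∃ δp δm : ℝ, δm < 0 ∧ 0 < δp ∧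
      ∀ t ∈ Set.Icc δm δp, t ≠ 0 → Φ y t ∉ S := by
    intro y hy
    obtain ⟨δp, δm, hδ, htr⟩ := hgs.transversal.trans
    obtain ⟨U, _, _, _, hav, _, _⟩ := htr y hy
    exact ⟨δp y, δm y, (hδ y hy).2, (hδ y hy).1, fun t ht htne => (hav t ht htne).2⟩
  have hcompact := hgs.transversal.compact_inter
  -- orbit relation
  have horbit : ∀ i : ℤ, (((Pr.toEquiv ^ (i + 1)) x : ↥S) : X)
      = Φ (((Pr.toEquiv ^ i) x : ↥S) : X) (g i) := by
    intro i
    have h1 : (Pr.toEquiv ^ (i + 1)) x = Pr ((Pr.toEquiv ^ i) x) := by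
      rw [add_comm, zpow_one_add]
      rfl
    rw [h1, hPr]
  -- forward partial sums
  set sfun : ℕ → ℝ := fun N => ∑ k ∈ Finset.range N, g k with hsfun
  have hsmono : StrictMono sfun := strictMono_nat_of_lt_succ (by
    intro N
    simp only [hsfun, Finset.sum_range_succ]
    linarith [hgpos (N : ℤ)])
  have horb_f : ∀ N : ℕ, (((Pr.toEquiv ^ (N : ℤ)) x : ↥S) : X) = Φ (x : X) (sfun N) := by
    intro N
    induction N with
    | zero => simp [hsfun, law.map_zero]
    | succ N ih =>
      have : ((N : ℕ) + 1 : ℤ) = (N : ℤ) + 1 := by push_cast; ring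
      rw [show ((N + 1 : ℕ) : ℤ) = (N : ℤ) + 1 by push_cast; ring, horbit, ih, law.map_add]
      simp [hsfun, Finset.sum_range_succ]
  have hS_f : ∀ N, Φ (x : X) (sfun N) ∈ S := by
    intro N
    rw [← horb_f N]
    exact Subtype.coe_prop _
  have hdivf : ¬BddAbove (Set.range sfun) :=
    tau_key_fwd Φ S law hcompact havoid (x : X) sfun hsmono hS_f
  -- backward partial sums
  set ufun : ℕ → ℝ := fun N => ∑ k ∈ Finset.range N, g (-(k + 1)) with hufun
  have humono : StrictMono ufun := strictMono_nat_of_lt_succ (by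
    intro N
    simp only [hufun, Finset.sum_range_succ]
    linarith [hgpos (-(N + 1) : ℤ)])
  have horb_b : ∀ N : ℕ, (((Pr.toEquiv ^ (-(N : ℤ))) x : ↥S) : X) = Φ (x : X) (-ufun N) := by
    intro N
    induction N with
    | zero => simp [hufun, law.map_zero]
    | succ N ih =>
      have hstep := horbit (-(N + 1 : ℤ))
      rw [show (-(N + 1 : ℤ) + 1) = -(N : ℤ) by ring] at hstep
      have := congrArg (fun z => Φ z (-(g (-(N + 1 : ℤ))))) hstep
      rw [law.map_add, add_neg_cancel, law.map_zero] at this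
      rw [show (-((N + 1 : ℕ) : ℤ)) = -(N + 1 : ℤ) by push_cast; ring, ← this, ih, law.map_add]
      congr 1
      simp only [hufun, Finset.sum_range_succ]
      push_cast
      ring
  have hS_b : ∀ N, Φ (x : X) (-ufun N) ∈ S := by
    intro N
    rw [← horb_b N]
    exact Subtype.coe_prop _
  have hdivb : ¬BddBelow (Set.range fun N => -ufun N) :=
    tau_key_bwd Φ S law hcompact havoid (x : X) (fun N => -ufun N)
      (fun a b hab => by simpa using humono hab) hS_b
  -- the primitive F
  set F : ℝ → ℝ := fun r => ∫ u in (0 : ℝ)..r, g ⌊u⌋ with hF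
  have hFtau : ∀ s, tauTime T Pr x t s = F (s + t) - t * g 0 := by
    intro s
    rw [tauTime, hRf, hg0]
  have hFadd : ∀ a b : ℝ, F b - F a = ∫ u in a..b, g ⌊u⌋ := by
    intro a b
    have := intervalIntegral.integral_add_adjacent_intervals
      (tau_aux_int g 0 a) (tau_aux_int g a b)
    simp only [hF]
    linarith [this]
  have hFmono : StrictMono F := by
    intro a b hab
    have := tau_aux_pos g hgpos hab
    have h2 := hFadd a b
    linarith
  have hFcont : Continuous F :=
    intervalIntegral.continuous_primitive (fun a b => tau_aux_int g a b) 0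
  -- values of F at integers
  have hFnat : ∀ N : ℕ, F (N : ℝ) = sfun N := by
    intro N
    have := tau_aux_sum g 0 N
    simpa [hF, hsfun] using this
  have hFneg : ∀ N : ℕ, F (-(N : ℝ)) = -ufun N := by
    intro N
    induction N with
    | zero => simp [hF, hufun]
    | succ N ih =>
      have hadj := intervalIntegral.integral_add_adjacent_intervals
        (tau_aux_int g 0 (-(N : ℝ))) (tau_aux_int g (-(N : ℝ)) (-((N : ℝ) + 1)))
      have hunit : ∫ u in (-((N : ℝ) + 1))..(-(N : ℝ)), g ⌊u⌋ = g (-(N + 1 : ℤ)) := by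
        have := tau_aux_unit g (-(N + 1 : ℤ))
        push_cast at this
        rw [show (-((N : ℝ) + 1) + 1) = -(N : ℝ) by ring] at this
        exact this
      have hswap : ∫ u in (-(N : ℝ))..(-((N : ℝ) + 1)), g ⌊u⌋ = -g (-(N + 1 : ℤ)) := by
        rw [intervalIntegral.integral_symm, hunit]
      have : F (-((N : ℝ) + 1)) = F (-(N : ℝ)) + ∫ u in (-(N : ℝ))..(-((N : ℝ) + 1)), g ⌊u⌋ := by
        simp only [hF]
        linarith [hadj]
      rw [show (-((N + 1 : ℕ) : ℝ)) = -((N : ℝ) + 1) by push_cast; ring, this, hswap, ih]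
      simp only [hufun, Finset.sum_range_succ]
      push_cast
      ring
  -- surjectivity of F
  have hFsurj : Function.Surjective F := by
    intro c
    obtain ⟨N, hN⟩ : ∃ N : ℕ, c ≤ F (N : ℝ) := by
      by_contra h
      push_neg at h
      exact hdivf ⟨c, by rintro r ⟨N, rfl⟩; rw [← hFnat N]; exact (h N).le⟩
    obtain ⟨M, hM⟩ : ∃ M : ℕ, F (-(M : ℝ)) ≤ c := by
      by_contra h
      push_neg at h
      exact hdivb ⟨c, by rintro r ⟨N, rfl⟩; show c ≤ -ufun N; rw [← hFneg N]; exact (h N).le⟩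
    have hMN : -(M : ℝ) ≤ (N : ℝ) := by
      have h1 : (0 : ℝ) ≤ N := Nat.cast_nonneg N
      have h2 : (0 : ℝ) ≤ M := Nat.cast_nonneg M
      linarith
    obtain ⟨r, _, hr⟩ := intermediate_value_Icc hMN hFcont.continuousOn ⟨hM, hN⟩
    exact ⟨r, hr⟩
  refine ⟨?_, ?_, ?_, ?_⟩
  · intro a b hab
    simp only [hFtau]
    have := hFmono (show a + t < b + t by linarith)
    linarith
  · simp only [hFtau]
    exact (hFcont.comp (continuous_id.add continuous_const)).sub continuous_const
  · intro c
    obtain ⟨r, hr⟩ := hFsurj (c + t * g 0)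
    exact ⟨r - t, by simp only [hFtau]; rw [sub_add_cancel, hr]; ring⟩
  · rw [hFtau, zero_add, sub_eq_zero]
    show (∫ u in (0 : ℝ)..t, g ⌊u⌋) = t * g 0
    have hEq : Set.EqOn (fun u : ℝ => g ⌊u⌋) (fun _ => g 0) (Set.uIcc 0 t) := by
      intro u hu
      rw [Set.uIcc_of_le ht0] at hu
      have : ⌊u⌋ = 0 := Int.floor_eq_zero_iff.2 ⟨hu.1, lt_of_le_of_lt hu.2 ht1⟩
      simp [this]
    rw [intervalIntegral.integral_congr hEq]
    simp [mul_comm]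
end

section
/- If (h,σ) : (Φ₁,X₁,S₁) → (Φ₂,X₂,S₂) is a rate-preserving weak morphism of flows with global Poincaré sections, then σ(x, t·T_{Φ₁}(x)) = t·σ(x, T_{Φ₁}(x)) for all x ∈ S₁ and 0 ≤ t < 1. -/
open Set Function Topology

/-- A section-preserving weak morphism `(h,σ)` between flows with global Poincaré
sections is *rate-preserving* if
`σ(Φ₁(x, t·T₁ x), ∫₀^{s+t} R_{Φ₁}(x) du − t·T₁ x) = ∫₀^{s+t} R_{Φ₂}(h x) du − t·T₂(h x)`
for all `x ∈ S₁`, `0 ≤ t < 1`, `s ∈ ℝ`. -/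
def RatePreserving {X₁ X₂ : Type*} [TopologicalSpace X₁] [TopologicalSpace X₂]
    (Φ₁ : X₁ → ℝ → X₁) {S₁ : Set X₁} {S₂ : Set X₂}
    (T₁ : X₁ → ℝ) (Pr₁ : ↥S₁ ≃ₜ ↥S₁) (T₂ : X₂ → ℝ) (Pr₂ : ↥S₂ ≃ₜ ↥S₂)
    (h : X₁ → X₂) (σ : X₁ → ℝ → ℝ) (hS : Set.MapsTo h S₁ S₂) : Prop :=
  ∀ (x : ↥S₁) (t : ℝ), 0 ≤ t → t < 1 → ∀ s : ℝ,
    σ (Φ₁ x (t * T₁ x)) (tauTime T₁ Pr₁ x t s) = tauTime T₂ Pr₂ ⟨h x, hS x.2⟩ t s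

lemma Rfun_integral_small {X : Type*} [TopologicalSpace X] (T : X → ℝ) {S : Set X}
    (Pr : ↥S ≃ₜ ↥S) (x : ↥S) {s : ℝ} (h0 : 0 ≤ s) (h1 : s ≤ 1) :
    ∫ u in (0:ℝ)..s, Rfun T Pr x u = s * T (x : X) := by
  have hae : ∀ᵐ u : ℝ, u ∈ Set.uIoc (0:ℝ) s → Rfun T Pr x u = T (x : X) := by
    have hone : ∀ᵐ u : ℝ, u ≠ 1 := by
      rw [MeasureTheory.ae_iff]
      have : {u : ℝ | ¬ u ≠ 1} = {1} := by ext u; simp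
      rw [this]; exact Real.volume_singleton
    filter_upwards [hone] with u hu hmem
    rw [Set.uIoc_of_le h0] at hmem
    have hfl : ⌊u⌋ = 0 := by
      rw [Int.floor_eq_zero_iff]
      constructor
      · exact le_of_lt hmem.1
      · exact lt_of_le_of_ne (hmem.2.trans h1) hu
    simp [Rfun, hfl]
  rw [intervalIntegral.integral_congr_ae hae, intervalIntegral.integral_const]
  simp [smul_eq_mul]

/-- a rate-preserving section-preserving weak morphism `(h,σ)` satisfies
`σ(x, t·T₁ x) = t·σ(x, T₁ x)` for all `x ∈ S₁` and `0 ≤ t < 1`. -/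
theorem ratePreserving_linear_on_section {X₁ X₂ : Type*}
    [TopologicalSpace X₁] [T2Space X₁] [SecondCountableTopology X₁]
    [TopologicalSpace X₂] [T2Space X₂] [SecondCountableTopology X₂] {n₁ n₂ : ℕ}
    (Φ₁ : X₁ → ℝ → X₁) (S₁ : Set X₁) (Φ₂ : X₂ → ℝ → X₂) (S₂ : Set X₂)
    (law₁ : FlowLaw Φ₁) (law₂ : FlowLaw Φ₂)
    (hgs₁ : IsGlobalSection n₁ Φ₁ S₁) (hgs₂ : IsGlobalSection n₂ Φ₂ S₂)
    (T₁ : X₁ → ℝ) (T₂ : X₂ → ℝ)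
    (hT₁ : IsFirstReturn Φ₁ S₁ T₁) (hT₂ : IsFirstReturn Φ₂ S₂ T₂)
    (Pr₁ : ↥S₁ ≃ₜ ↥S₁) (hPr₁ : ∀ x : ↥S₁, (Pr₁ x : X₁) = Φ₁ x (T₁ x))
    (Pr₂ : ↥S₂ ≃ₜ ↥S₂) (hPr₂ : ∀ x : ↥S₂, (Pr₂ x : X₂) = Φ₂ x (T₂ x))
    (h : X₁ → X₂) (σ : X₁ → ℝ → ℝ) (hw : IsWeakMorphism Φ₁ Φ₂ h σ)
    (hpre : h ⁻¹' S₂ = S₁) (hS : Set.MapsTo h S₁ S₂)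
    (hrp : RatePreserving Φ₁ T₁ Pr₁ T₂ Pr₂ h σ hS) :
    ∀ (x : ↥S₁) (t : ℝ), 0 ≤ t → t < 1 →
      σ x (t * T₁ x) = t * σ x (T₁ x) := by
  intro x t ht ht1
  have key : ∀ s : ℝ, 0 ≤ s → s ≤ 1 → σ x (s * T₁ x) = s * T₂ (h x) := by
    intro s h0 h1
    have hr := hrp x 0 le_rfl one_pos s
    simp only [tauTime, zero_mul, law₁.map_zero, add_zero, sub_zero] at hr
    rw [Rfun_integral_small T₁ Pr₁ x h0 h1, Rfun_integral_small T₂ Pr₂ _ h0 h1] at hr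
    exact hr
  have h1 := key t ht (le_of_lt ht1)
  have h2 := key 1 zero_le_one le_rfl
  rw [one_mul, one_mul] at h2
  rw [h1, h2]
end

section
/- For any map dynamical system (f,X), the unit map l : X → (X_f)₀, l(x) := [x,0], is a morphism from (f,X) to the Poincaré map of the suspension of f, i.e., l∘f = P(Σf)∘l, and moreover l is a homeomorphism onto the zero section (X_f)₀. Conversely, for a flow (Φ,X) with global Poincaré section S, the counit satisfies the triangle identity P(k) ∘ l_{P(Φ,X,S)} = id_S, where k([x,0]) = Φ(x,0) = x; that is, the composite S → (S_{PΦ})₀ → S is the identity. -/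
open Set Function Topology

section Aux

variable {X : Type*} [TopologicalSpace X] (f : X ≃ₜ X)

lemma contPow : ∀ n : ℤ, Continuous ⇑(f.toEquiv ^ n) := by
  intro n
  induction n using Int.induction_on with
  | zero => simpa using continuous_id
  | succ k ih =>
      have : (f.toEquiv ^ ((k : ℤ) + 1)) = f.toEquiv ^ (k : ℤ) * f.toEquiv := zpow_add_one _ _
      rw [this]
      simpa [Equiv.Perm.mul_apply] using ih.comp f.continuous
  | pred k ih =>
      have : (f.toEquiv ^ (-(k : ℤ) - 1)) = f.toEquiv ^ (-(k : ℤ)) * f.toEquiv⁻¹ :=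
        zpow_sub_one _ _
      rw [this]
      have hcs : Continuous ⇑(f.toEquiv⁻¹) := by
        have : ⇑(f.toEquiv⁻¹) = ⇑f.symm := rfl
        rw [this]; exact f.symm.continuous
      simpa [Equiv.Perm.mul_apply] using ih.comp hcs

lemma mtk_shift : ∀ n : ℤ, ∀ x : X, ∀ t : ℝ,
    Quot.mk (MTRel f) (x, t) = Quot.mk (MTRel f) ((f.toEquiv ^ n) x, t - n) := by
  intro n
  induction n using Int.induction_on with
  | zero => intro x t; simp
  | succ k ih =>
      intro x t
      have h1 : Quot.mk (MTRel f) (x, t) = Quot.mk (MTRel f) (f x, t - 1) :=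
        Quot.sound ⟨rfl, rfl⟩
      rw [h1, ih (f x) (t - 1)]
      congr 1
      have : (f.toEquiv ^ ((k : ℤ) + 1)) x = (f.toEquiv ^ (k : ℤ)) (f x) := by
        rw [zpow_add_one]; rfl
      rw [Prod.ext_iff]
      constructor
      · exact this.symm
      · push_cast; ring_nf
  | pred k ih =>
      intro x t
      have h1 : Quot.mk (MTRel f) (f.symm x, t + 1) = Quot.mk (MTRel f) (x, t) :=
        Quot.sound ⟨by simp, by ring⟩
      rw [← h1, ih (f.symm x) (t + 1)]
      congr 1
      have : (f.toEquiv ^ (-(k : ℤ) - 1)) x = (f.toEquiv ^ (-(k : ℤ))) (f.symm x) := by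
        rw [zpow_sub_one]; rfl
      rw [Prod.ext_iff]
      constructor
      · exact this.symm
      · push_cast; ring_nf

lemma mt_eq_iff (p q : X × ℝ) :
    Quot.mk (MTRel f) p = Quot.mk (MTRel f) q ↔
      ∃ n : ℤ, q.1 = (f.toEquiv ^ n) p.1 ∧ q.2 = p.2 - n := by
  constructor
  · intro h
    have h' := Quot.eq.mp h
    induction h' with
    | rel a b hab => exact ⟨1, by simpa using hab.1, by simpa using hab.2⟩
    | refl a => exact ⟨0, by simp, by simp⟩
    | symm a b hab ih =>
        obtain ⟨m, h1, h2⟩ := ih (Quot.eqvGen_sound hab)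
        refine ⟨-m, ?_, ?_⟩
        · rw [h1, ← Equiv.Perm.mul_apply, ← zpow_add]; simp
        · rw [h2]; push_cast; ring
    | trans a b c _ _ ih1 ih2 =>
        obtain ⟨m1, h11, h12⟩ := ih1 (Quot.eqvGen_sound ‹Relation.EqvGen _ a b›)
        obtain ⟨m2, h21, h22⟩ := ih2 (Quot.eqvGen_sound ‹Relation.EqvGen _ b c›)
        refine ⟨m1 + m2, ?_, ?_⟩
        · rw [h21, h11, ← Equiv.Perm.mul_apply, ← zpow_add, add_comm]
        · rw [h22, h12]; push_cast; ring
  · rintro ⟨n, h1, h2⟩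
    have := mtk_shift f n p.1 p.2
    rw [this]
    congr 1
    exact (Prod.ext h1 h2).symm

lemma mt_openMap : IsOpenMap (Quot.mk (MTRel f)) := by
  intro U hU
  rw [isOpen_coinduced]
  have : Quot.mk (MTRel f) ⁻¹' (Quot.mk (MTRel f) '' U) =
      ⋃ n : ℤ, (fun p : X × ℝ => ((f.toEquiv ^ (-n)) p.1, p.2 + n)) ⁻¹' U := by
    ext q
    simp only [mem_preimage, mem_image, mem_iUnion]
    constructor
    · rintro ⟨p, hp, hpq⟩
      obtain ⟨n, h1, h2⟩ := (mt_eq_iff f p q).mp hpq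
      refine ⟨n, ?_⟩
      have hx : (f.toEquiv ^ (-n)) q.1 = p.1 := by
        rw [h1, ← Equiv.Perm.mul_apply, ← zpow_add]; simp
      have ht : q.2 + n = p.2 := by rw [h2]; ring
      have heq : ((f.toEquiv ^ (-n)) q.1, q.2 + (n:ℝ)) = p := Prod.ext hx ht
      rw [heq]; exact hp
    · rintro ⟨n, hn⟩
      refine ⟨((f.toEquiv ^ (-n)) q.1, q.2 + n), hn, ?_⟩
      rw [mt_eq_iff]
      refine ⟨n, ?_, ?_⟩
      · simp only
        rw [← Equiv.Perm.mul_apply, ← zpow_add]; simp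
      · simp only; ring
  rw [this]
  exact isOpen_iUnion fun n =>
    hU.preimage (((contPow f (-n)).comp continuous_fst).prodMk
      (continuous_snd.add continuous_const))


lemma mt_embedding : Topology.IsEmbedding (fun x : X => mtk f x 0) := by
  set W : Set (X × ℝ) := univ ×ˢ Ioo (-(1/2 : ℝ)) (1/2) with hWdef
  have hW : IsOpen W := isOpen_univ.prod isOpen_Ioo
  set πW : W → MappingTorus f := fun w => Quot.mk (MTRel f) (w : X × ℝ) with hπdef
  have hcont : Continuous πW := continuous_quot_mk.comp continuous_subtype_val
  have hinj : Function.Injective πW := by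
    rintro ⟨p, _, hp2⟩ ⟨q, _, hq2⟩ h
    obtain ⟨m, h1, h2⟩ := (mt_eq_iff f p q).mp h
    have hm : m = 0 := by
      have hb1 := hp2.1; have hb2 := hp2.2
      have hb3 := hq2.1; have hb4 := hq2.2
      have hlt : -1 < (m : ℝ) ∧ (m : ℝ) < 1 := by
        constructor <;> [nlinarith [h2]; nlinarith [h2]]
      have : -1 < m ∧ m < 1 := by exact_mod_cast hlt
      omega
    subst hm
    exact Subtype.ext (Prod.ext (by simpa using h1.symm) (by simpa using h2.symm))
  have hopen : IsOpenMap πW := (mt_openMap f).comp hW.isOpenMap_subtype_val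
  have hWemb : Topology.IsOpenEmbedding πW :=
    Topology.IsOpenEmbedding.of_continuous_injective_isOpenMap hcont hinj hopen
  set j : X → W := fun x => ⟨(x, 0), mem_univ x, by constructor <;> norm_num⟩ with hjdef
  have hjc : Continuous j :=
    Continuous.subtype_mk (continuous_id.prodMk continuous_const) _
  have hje : Topology.IsEmbedding j := by
    refine Topology.IsEmbedding.of_comp hjc
      (continuous_fst.comp continuous_subtype_val) ?_
    have h : (Prod.fst ∘ Subtype.val) ∘ j = @id X := rfl
    rw [h]; exact Topology.IsEmbedding.id
  have : (fun x : X => mtk f x 0) = πW ∘ j := rfl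
  rw [this]
  exact hWemb.isEmbedding.comp hje


end Aux

/-- the unit and the triangle identity of the suspension/Poincaré-map
adjunction.  (a) For a map dynamical system `(f,X)`, `l(x) = [x,0]` is a homeomorphism
onto the zero section of the mapping torus which intertwines `f` with the Poincaré map
of the suspension flow (whose first return to the zero section happens at time `1`).
(b) For a flow `(Φ,X)` with global Poincaré section `S`, the composite
`S → (S_{PΦ})₀ → S`, `x ↦ k([x,0]) = Φ(x,0) = x`, is the identity. -/
theorem suspension_poincare_triangle {X Y : Type*} [TopologicalSpace X]
    [TopologicalSpace Y] [T2Space Y] [SecondCountableTopology Y] {n : ℕ}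
    (f : X ≃ₜ X)
    (Φ : Y → ℝ → Y) (S : Set Y) (law : FlowLaw Φ) (hgs : IsGlobalSection n Φ S)
    (T : Y → ℝ) (hT : IsFirstReturn Φ S T)
    (Pr : ↥S ≃ₜ ↥S) (hPr : ∀ x : ↥S, (Pr x : Y) = Φ x (T x)) :
    (Topology.IsEmbedding fun x : X => mtk f x 0) ∧
    (Set.range fun x : X => mtk f x 0) = zeroSection f ∧
    (∀ x : X, susp f (mtk f x 0) 1 = mtk f (f x) 0) ∧
    (∀ x : X, ∀ t ∈ Set.Ioo (0:ℝ) 1, susp f (mtk f x 0) t ∉ zeroSection f) ∧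
    ∀ k : MappingTorus Pr → Y,
      (∀ (x : ↥S) (t : ℝ), 0 ≤ t → t < 1 → k (mtk Pr x t) = Φ x (t * T x)) →
      ∀ x : ↥S, k (mtk Pr x 0) = x := by
  refine ⟨mt_embedding f, ?_, ?_, ?_, ?_⟩
  · ext p
    simp only [Set.mem_range, zeroSection, mem_setOf_eq]
    exact exists_congr fun x => eq_comm
  · intro x
    show Quot.mk (MTRel f) (x, 0 + 1) = Quot.mk (MTRel f) (f x, 0)
    exact Quot.sound ⟨rfl, by norm_num⟩
  · rintro x t ⟨ht0, ht1⟩ ⟨y, hy⟩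
    have hy' : Quot.mk (MTRel f) (x, 0 + t) = Quot.mk (MTRel f) (y, 0) := hy
    obtain ⟨m, _, h2⟩ := (mt_eq_iff f _ _).mp hy'
    simp only at h2
    have hmt : (m : ℝ) = t := by linarith
    have : 0 < (m : ℝ) ∧ (m : ℝ) < 1 := by rw [hmt]; exact ⟨ht0, ht1⟩
    have : 0 < m ∧ m < 1 := by exact_mod_cast this
    omega
  · intro k hk x
    rw [hk x 0 le_rfl zero_lt_one]
    simp [law.map_zero]
end
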